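/- arXiv:1504.04467 — 6 statements merged into one kernel-verified Lean document; each statement's English description precedes it below -/
import Mathlib

section
/- For every natural number n ≥ 1, C_n = ∫_2^{p_n} π(x) dx, where the integral is over the real interval [2, p_n]. -/
open Filter Asymptotics

/-- `nthPrime n` is the `n`-th prime number, with `nthPrime 1 = 2`. -/
noncomputable def nthPrime (n : ℕ) : ℕ := Nat.nth Nat.Prime (n - 1)

/-- `Cseq n = n * p_n - ∑_{k ≤ n} p_k`. -/
noncomputable def Cseq (n : ℕ) : ℝ := n * nthPrime n - ∑ k ∈ Finset.Icc 1 n, (nthPrime k : ℝ)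

/-- `primePi x` is the number of primes not exceeding the real number `x`. -/
noncomputable def primePi (x : ℝ) : ℕ := Nat.primeCounting ⌊x⌋₊

/-- `li x = ∫_2^x dt / log t`. -/
noncomputable def li (x : ℝ) : ℝ := ∫ t in (2:ℝ)..x, 1 / Real.log t

lemma primeInf : (setOf Nat.Prime).Infinite := Nat.infinite_setOf_prime

lemma primePi_mono : Monotone primePi :=
  Nat.monotone_primeCounting.comp (Nat.floor_mono)

lemma primePi_intble (a b : ℝ) :
    IntervalIntegrable (fun x => (primePi x : ℝ)) MeasureTheory.volume a b := by
  apply Monotone.intervalIntegrable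
  exact fun x y h => Nat.cast_le.2 (primePi_mono h)

lemma primePi_eq (k : ℕ) {x : ℝ} (h1 : (Nat.nth Nat.Prime k : ℝ) ≤ x)
    (h2 : x < (Nat.nth Nat.Prime (k+1) : ℝ)) : primePi x = k + 1 := by
  have hx0 : 0 ≤ x := le_trans (by positivity) h1
  have hl : Nat.nth Nat.Prime k ≤ ⌊x⌋₊ := Nat.le_floor h1
  have hr : ⌊x⌋₊ < Nat.nth Nat.Prime (k+1) := (Nat.floor_lt hx0).2 h2
  unfold primePi
  have hub : Nat.primeCounting ⌊x⌋₊ ≤ k + 1 := by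
    calc Nat.count Nat.Prime (⌊x⌋₊ + 1) ≤ Nat.count Nat.Prime (Nat.nth Nat.Prime (k+1)) :=
          Nat.count_monotone _ hr
      _ = k + 1 := Nat.count_nth_of_infinite primeInf _
  have hlb : k + 1 ≤ Nat.primeCounting ⌊x⌋₊ := by
    calc k + 1 = Nat.count Nat.Prime (Nat.nth Nat.Prime k + 1) :=
          (Nat.count_nth_succ_of_infinite primeInf k).symm
      _ ≤ Nat.count Nat.Prime (⌊x⌋₊ + 1) := Nat.count_monotone _ (by omega)
  omega

lemma step_integral (k : ℕ) :
    ∫ x in ((Nat.nth Nat.Prime k : ℝ))..((Nat.nth Nat.Prime (k+1) : ℝ)), (primePi x : ℝ)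
      = (k + 1) * ((Nat.nth Nat.Prime (k+1) : ℝ) - (Nat.nth Nat.Prime k : ℝ)) := by
  have hle : (Nat.nth Nat.Prime k : ℝ) ≤ (Nat.nth Nat.Prime (k+1) : ℝ) := by
    exact_mod_cast (Nat.nth_lt_nth primeInf |>.2 (Nat.lt_succ_self k)).le
  rw [show ∫ x in ((Nat.nth Nat.Prime k : ℝ))..((Nat.nth Nat.Prime (k+1) : ℝ)), (primePi x : ℝ)
      = ∫ _ in ((Nat.nth Nat.Prime k : ℝ))..((Nat.nth Nat.Prime (k+1) : ℝ)), ((k:ℝ) + 1) from ?_,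
    intervalIntegral.integral_const, smul_eq_mul, mul_comm]
  apply intervalIntegral.integral_congr_ae
  have hne : ∀ᵐ x : ℝ, x ≠ (Nat.nth Nat.Prime (k+1) : ℝ) := by
    rw [MeasureTheory.ae_iff]
    simp [not_not, Set.setOf_eq_eq_singleton, MeasureTheory.measure_singleton]
  filter_upwards [hne] with x hx hxI
  rw [Set.uIoc_of_le hle] at hxI
  have := primePi_eq k hxI.1.le (lt_of_le_of_ne hxI.2 hx)
  rw [this]; push_cast; ring
theorem Cseq_eq_integral_primePi (n : ℕ) (hn : 1 ≤ n) :
    Cseq n = ∫ x in (2:ℝ)..(nthPrime n : ℝ), (primePi x : ℝ) := by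
  induction n, hn using Nat.le_induction with
  | base =>
    have h2 : nthPrime 1 = 2 := Nat.nth_prime_zero_eq_two
    simp [Cseq, h2]
  | succ n hn ih =>
    have hk : n - 1 + 1 = n := Nat.succ_pred_eq_of_pos hn
    have hP : nthPrime (n+1) = Nat.nth Nat.Prime n := by
      simp [nthPrime]
    have hPn : nthPrime n = Nat.nth Nat.Prime (n-1) := rfl
    have h2le : (2:ℝ) ≤ (nthPrime n : ℝ) := by
      rw [hPn]
      exact_mod_cast (Nat.prime_nth_prime (n-1)).two_le
    have hle : (nthPrime n : ℝ) ≤ (nthPrime (n+1) : ℝ) := by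
      rw [hPn, hP]
      exact_mod_cast (Nat.nth_monotone primeInf (by omega : n - 1 ≤ n))
    have hsplit := intervalIntegral.integral_add_adjacent_intervals (a := (2:ℝ))
      (b := (nthPrime n : ℝ)) (c := (nthPrime (n+1) : ℝ))
      (f := fun x => (primePi x : ℝ)) (primePi_intble _ _) (primePi_intble _ _)
    have hstep : ∫ x in ((nthPrime n : ℝ))..((nthPrime (n+1) : ℝ)), (primePi x : ℝ)
        = n * ((nthPrime (n+1) : ℝ) - (nthPrime n : ℝ)) := by
      have := step_integral (n-1)
      rw [hk] at this
      rw [hPn, hP, this]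
      congr 1
      exact_mod_cast congrArg (Nat.cast (R:=ℝ)) hk
    rw [← hsplit, ← ih, hstep]
    have hsum : ∑ k ∈ Finset.Icc 1 (n+1), (nthPrime k : ℝ)
        = (∑ k ∈ Finset.Icc 1 n, (nthPrime k : ℝ)) + nthPrime (n+1) := by
      rw [← Finset.sum_Icc_succ_top (by omega : 1 ≤ n + 1)]
    simp only [Cseq, hsum]
    push_cast
    ring
end

section
/- For all real numbers r, s with s ≥ r > 1 and every natural number m ≥ 2, ∫_r^s x/(log x)^m dx = (2^{m-2}/(m-1)!)·∫_r^s x/(log x)² dx − Σ_{k=2}^{m-1} (2^{m-1-k}·(k-1)!/(m-1)!)·( s²/(log s)^k − r²/(log r)^k ). -/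
open Filter Asymptotics

lemma aux_mem (r s x : ℝ) (hr : 1 < r) (hs : r ≤ s) (hx : x ∈ Set.uIcc r s) : 1 < x := by
  rw [Set.uIcc_of_le hs] at hx
  exact lt_of_lt_of_le hr hx.1

lemma aux_intb (r s : ℝ) (hr : 1 < r) (hs : r ≤ s) (k : ℕ) :
    IntervalIntegrable (fun x => x / Real.log x ^ k) MeasureTheory.volume r s := by
  apply ContinuousOn.intervalIntegrable
  apply ContinuousOn.div continuousOn_id
  · apply ContinuousOn.pow
    apply Real.continuousOn_log.mono
    intro x hx
    have h1 := aux_mem r s x hr hs hx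
    simp only [Set.mem_compl_iff, Set.mem_singleton_iff]
    linarith
  · intro x hx
    have h1 := aux_mem r s x hr hs hx
    exact pow_ne_zero _ (ne_of_gt (Real.log_pos h1))

lemma aux_deriv (n : ℕ) (x : ℝ) (hx : 1 < x) :
    HasDerivAt (fun y => y ^ 2 / Real.log y ^ (n + 1))
      (2 * (x / Real.log x ^ (n + 1)) - ((n : ℝ) + 1) * (x / Real.log x ^ (n + 2))) x := by
  have hx0 : x ≠ 0 := by linarith
  have hL : Real.log x ≠ 0 := ne_of_gt (Real.log_pos hx)
  have h1 : HasDerivAt (fun y : ℝ => y ^ 2) (2 * x) x := by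
    simpa using hasDerivAt_pow 2 x
  have h2 : HasDerivAt Real.log x⁻¹ x := Real.hasDerivAt_log hx0
  have h3 : HasDerivAt (fun y => Real.log y ^ (n + 1))
      (((n : ℝ) + 1) * Real.log x ^ n * x⁻¹) x := by
    simpa using h2.fun_pow (n + 1)
  have := h1.fun_div h3 (pow_ne_zero _ hL)
  convert this using 1
  · rfl
  · rfl
  field_simp
  ring

lemma aux_step (r s : ℝ) (hr : 1 < r) (hs : r ≤ s) (n : ℕ) :
    ∫ x in r..s, x / Real.log x ^ (n + 2) =
      (2 / ((n : ℝ) + 1)) * (∫ x in r..s, x / Real.log x ^ (n + 1))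
        - (1 / ((n : ℝ) + 1)) * (s ^ 2 / Real.log s ^ (n + 1) - r ^ 2 / Real.log r ^ (n + 1)) := by
  have hint1 := aux_intb r s hr hs (n + 1)
  have hint2 := aux_intb r s hr hs (n + 2)
  have key : ∫ x in r..s,
      (2 * (x / Real.log x ^ (n + 1)) - ((n : ℝ) + 1) * (x / Real.log x ^ (n + 2))) =
      s ^ 2 / Real.log s ^ (n + 1) - r ^ 2 / Real.log r ^ (n + 1) := by
    apply intervalIntegral.integral_eq_sub_of_hasDerivAt
    · intro x hx
      exact aux_deriv n x (aux_mem r s x hr hs hx)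
    · exact (hint1.const_mul 2).sub (hint2.const_mul _)
  rw [intervalIntegral.integral_sub (hint1.const_mul 2) (hint2.const_mul _),
    intervalIntegral.integral_const_mul, intervalIntegral.integral_const_mul] at key
  have hn : ((n : ℝ) + 1) ≠ 0 := by positivity
  field_simp
  linarith [key]

theorem integral_div_log_pow (r s : ℝ) (hr : 1 < r) (hs : r ≤ s) (m : ℕ) (hm : 2 ≤ m) :
    ∫ x in r..s, x / Real.log x ^ m =
      (2 ^ (m - 2) / ((m - 1).factorial : ℝ)) * (∫ x in r..s, x / Real.log x ^ 2)
        - ∑ k ∈ Finset.Icc 2 (m - 1), (2 ^ (m - 1 - k) * ((k - 1).factorial : ℝ) / ((m - 1).factorial : ℝ))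
            * (s ^ 2 / Real.log s ^ k - r ^ 2 / Real.log r ^ k) := by
  induction m, hm using Nat.le_induction with
  | base =>
      simp [Finset.Icc_eq_empty (by norm_num : ¬ (2:ℕ) ≤ 1)]
  | succ m hm ih =>
      obtain ⟨n, rfl⟩ : ∃ n, m = n + 2 := ⟨m - 2, (Nat.sub_add_cancel hm).symm⟩
      have hstep := aux_step r s hr hs (n + 1)
      have hred : n + 2 + 1 = n + 1 + 2 := by ring
      rw [hred, hstep, ih]
      have h1 : n + 2 + 1 - 2 = n + 1 := rfl
      have h2 : n + 2 + 1 - 1 = n + 2 := rfl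
      have h3 : n + 2 - 2 = n := rfl
      have h4 : n + 2 - 1 = n + 1 := rfl
      rw [h1, h2, h3, h4]
      rw [Finset.sum_Icc_succ_top (by omega : 2 ≤ n + 2)]
      have hfac : ((n + 2).factorial : ℝ) = ((n : ℝ) + 2) * ((n + 1).factorial : ℝ) := by
        rw [Nat.factorial_succ]; push_cast; ring
      have hfpos : ((n + 1).factorial : ℝ) ≠ 0 := by positivity
      have hn2 : ((n : ℝ) + 2) ≠ 0 := by positivity
      have hsum : ∀ k ∈ Finset.Icc 2 (n + 1),
          (2 / ((n : ℝ) + 2)) * ((2 ^ (n + 1 - k) * ((k - 1).factorial : ℝ) / ((n + 1).factorial : ℝ))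
            * (s ^ 2 / Real.log s ^ k - r ^ 2 / Real.log r ^ k)) =
          (2 ^ (n + 2 - k) * ((k - 1).factorial : ℝ) / ((n + 2).factorial : ℝ))
            * (s ^ 2 / Real.log s ^ k - r ^ 2 / Real.log r ^ k) := by
        intro k hk
        have hk' : k ≤ n + 1 := (Finset.mem_Icc.mp hk).2
        have hpow : (2 : ℝ) ^ (n + 2 - k) = 2 * 2 ^ (n + 1 - k) := by
          rw [show n + 2 - k = (n + 1 - k) + 1 by omega, pow_succ]; ring
        rw [hpow, hfac]
        field_simp
      push_cast at hsum ⊢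
      rw [← Finset.sum_congr rfl hsum, ← Finset.mul_sum]
      simp only [Nat.add_sub_cancel, Nat.sub_self, pow_zero, one_mul]
      rw [hfac]
      field_simp
      ring
end

section
/- Let m ≥ 2 be a natural number, let a_2, …, a_m be real numbers, and let r, s be real numbers with s ≥ r > 1. Then Σ_{k=2}^m a_k·∫_r^s x/(log x)^k dx = t_{m-1,1}·∫_r^s x/(log x)² dx − Σ_{k=2}^{m-1} t_{m-1,k}·( s²/(log s)^k − r²/(log r)^k ), where t_{i,j} := (j-1)!·Σ_{l=j}^{i} 2^{l-j}·a_{l+1}/l!. -/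
open Filter Asymptotics

lemma keyA (r s : ℝ) (hr : 1 < r) (hs : r ≤ s) (n : ℕ) :
    ((n : ℝ) + 1) * ∫ x in r..s, x / Real.log x ^ (n + 2) =
      2 * (∫ x in r..s, x / Real.log x ^ (n + 1))
        - (s ^ 2 / Real.log s ^ (n + 1) - r ^ 2 / Real.log r ^ (n + 1)) := by
  have huIcc : Set.uIcc r s = Set.Icc r s := Set.uIcc_of_le hs
  have hmem : ∀ x ∈ Set.uIcc r s, 1 < x := by
    rw [huIcc]; intro x hx; exact lt_of_lt_of_le hr hx.1
  have hlogpos : ∀ x ∈ Set.uIcc r s, 0 < Real.log x := fun x hx => Real.log_pos (hmem x hx)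
  have hcont : ∀ k : ℕ, ContinuousOn (fun x => x / Real.log x ^ k) (Set.uIcc r s) := by
    intro k
    apply ContinuousOn.div continuousOn_id
    · exact (Real.continuousOn_log.mono (fun x hx => by
        simp only [Set.mem_compl_iff, Set.mem_singleton_iff]
        exact ne_of_gt (lt_trans zero_lt_one (hmem x hx)))).pow k
    · intro x hx; exact pow_ne_zero _ (ne_of_gt (hlogpos x hx))
  have hint : ∀ k : ℕ, IntervalIntegrable (fun x => x / Real.log x ^ k) MeasureTheory.volume r s :=
    fun k => (hcont k).intervalIntegrable
  have hderiv : ∀ x ∈ Set.uIcc r s,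
      HasDerivAt (fun x => x ^ 2 / Real.log x ^ (n + 1))
        (2 * (x / Real.log x ^ (n + 1)) - ((n : ℝ) + 1) * (x / Real.log x ^ (n + 2))) x := by
    intro x hx
    have hx1 : 1 < x := hmem x hx
    have hx0 : x ≠ 0 := ne_of_gt (lt_trans zero_lt_one hx1)
    have hL : Real.log x ≠ 0 := ne_of_gt (hlogpos x hx)
    have h1 : HasDerivAt (fun x : ℝ => x ^ 2) (2 * x) x := by
      simpa using hasDerivAt_pow 2 x
    have h2 : HasDerivAt (fun x => Real.log x ^ (n + 1))
        ((((n : ℝ) + 1) * Real.log x ^ n) * x⁻¹) x := by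
      have := (hasDerivAt_pow (n + 1) (Real.log x)).comp x (Real.hasDerivAt_log hx0)
      simpa [Function.comp_def, Nat.cast_add, mul_comm, mul_assoc] using this
    have := h1.div h2 (pow_ne_zero _ hL)
    refine this.congr_deriv ?_
    field_simp
    ring
  have hFTC := intervalIntegral.integral_eq_sub_of_hasDerivAt hderiv
    (((hint (n + 1)).const_mul 2).sub ((hint (n + 2)).const_mul ((n : ℝ) + 1)))
  rw [intervalIntegral.integral_sub ((hint (n + 1)).const_mul 2)
      ((hint (n + 2)).const_mul ((n : ℝ) + 1)),
    intervalIntegral.integral_const_mul, intervalIntegral.integral_const_mul] at hFTC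

  linarith

lemma formulaB (r s : ℝ) (hr : 1 < r) (hs : r ≤ s) (k : ℕ) :
    2 * (((k + 1).factorial : ℝ)) * ∫ x in r..s, x / Real.log x ^ (k + 2) =
      2 ^ (k + 1) * (∫ x in r..s, x / Real.log x ^ 2)
        - ∑ j ∈ Finset.Icc 2 (k + 1), ((j - 1).factorial : ℝ) * 2 ^ (k + 2 - j)
            * (s ^ 2 / Real.log s ^ j - r ^ 2 / Real.log r ^ j) := by
  induction k with
  | zero =>
    rw [Finset.Icc_eq_empty (by omega)]
    norm_num
  | succ k IH =>
    have hkey := keyA r s hr hs (k + 1)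
    push_cast at hkey
    rw [Finset.sum_Icc_succ_top (by omega : 2 ≤ k + 1 + 1)]
    have hsum : ∑ j ∈ Finset.Icc 2 (k + 1), ((j - 1).factorial : ℝ) * 2 ^ (k + 1 + 2 - j)
            * (s ^ 2 / Real.log s ^ j - r ^ 2 / Real.log r ^ j)
        = 2 * ∑ j ∈ Finset.Icc 2 (k + 1), ((j - 1).factorial : ℝ) * 2 ^ (k + 2 - j)
            * (s ^ 2 / Real.log s ^ j - r ^ 2 / Real.log r ^ j) := by
      rw [Finset.mul_sum]
      refine Finset.sum_congr rfl (fun j hj => ?_)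
      rw [Finset.mem_Icc] at hj
      rw [show k + 1 + 2 - j = (k + 2 - j) + 1 from by omega, pow_succ]
      ring
    rw [hsum, show k + 1 + 2 - (k + 1 + 1) = 1 from by omega,
      show k + 1 + 1 - 1 = k + 1 from by omega,
      show (k + 1 + 1).factorial = (k + 2) * (k + 1).factorial from rfl]
    push_cast
    linear_combination 2 * ((k + 1).factorial : ℝ) * hkey + 2 * IH

theorem sum_integral_div_log_pow (m : ℕ) (hm : 2 ≤ m) (a : ℕ → ℝ) (r s : ℝ)
    (hr : 1 < r) (hs : r ≤ s) (t : ℕ → ℕ → ℝ)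
    (ht : ∀ i j, t i j = ((j - 1).factorial : ℝ) *
        ∑ l ∈ Finset.Icc j i, 2 ^ (l - j) * a (l + 1) / (l.factorial : ℝ)) :
    ∑ k ∈ Finset.Icc 2 m, a k * ∫ x in r..s, x / Real.log x ^ k =
      t (m - 1) 1 * (∫ x in r..s, x / Real.log x ^ 2)
        - ∑ k ∈ Finset.Icc 2 (m - 1), t (m - 1) k
            * (s ^ 2 / Real.log s ^ k - r ^ 2 / Real.log r ^ k) := by
  induction m, hm using Nat.le_induction with
  | base =>
    rw [Finset.Icc_self, Finset.sum_singleton, Finset.Icc_eq_empty (by omega),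
      Finset.sum_empty, ht]
    norm_num [Finset.Icc_self]
  | succ m hm IH =>
    simp only [Nat.add_sub_cancel]
    rw [Finset.sum_Icc_succ_top (by omega : 2 ≤ m + 1), IH]
    have hfac : (m.factorial : ℝ) ≠ 0 := Nat.cast_ne_zero.mpr m.factorial_ne_zero
    -- decomposition of t m j
    have hts : ∀ j, 1 ≤ j → j ≤ m → t m j = t (m - 1) j
        + ((j - 1).factorial : ℝ) * (2 ^ (m - j) * a (m + 1) / (m.factorial : ℝ)) := by
      intro j hj1 hjm
      rw [ht, ht, show Finset.Icc j m = Finset.Icc j (m - 1 + 1) from by rw [Nat.sub_add_cancel (by omega)],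
        Finset.sum_Icc_succ_top (by omega : j ≤ m - 1 + 1), Nat.sub_add_cancel (by omega), mul_add]
    have h1 : t m 1 = t (m - 1) 1 + 2 ^ (m - 1) * a (m + 1) / (m.factorial : ℝ) := by
      rw [hts 1 le_rfl (by omega)]
      norm_num
    have h2 : ∑ k ∈ Finset.Icc 2 m, t m k
            * (s ^ 2 / Real.log s ^ k - r ^ 2 / Real.log r ^ k)
        = (∑ k ∈ Finset.Icc 2 (m - 1), t (m - 1) k
            * (s ^ 2 / Real.log s ^ k - r ^ 2 / Real.log r ^ k))
          + ∑ k ∈ Finset.Icc 2 m, ((k - 1).factorial : ℝ)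
              * (2 ^ (m - k) * a (m + 1) / (m.factorial : ℝ))
              * (s ^ 2 / Real.log s ^ k - r ^ 2 / Real.log r ^ k) := by
      have h2a : ∑ k ∈ Finset.Icc 2 m, t m k
              * (s ^ 2 / Real.log s ^ k - r ^ 2 / Real.log r ^ k)
          = ∑ k ∈ Finset.Icc 2 m, (t (m - 1) k
              * (s ^ 2 / Real.log s ^ k - r ^ 2 / Real.log r ^ k)
            + ((k - 1).factorial : ℝ)
              * (2 ^ (m - k) * a (m + 1) / (m.factorial : ℝ))
              * (s ^ 2 / Real.log s ^ k - r ^ 2 / Real.log r ^ k)) := by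
        refine Finset.sum_congr rfl (fun k hk => ?_)
        rw [Finset.mem_Icc] at hk
        rw [hts k (by omega) hk.2]
        ring
      rw [h2a, Finset.sum_add_distrib,
        show Finset.Icc 2 m = Finset.Icc 2 (m - 1 + 1) from by rw [Nat.sub_add_cancel (by omega)],
        Finset.sum_Icc_succ_top (by omega : 2 ≤ m - 1 + 1), Nat.sub_add_cancel (by omega)]
      have : t (m - 1) m = 0 := by
        rw [ht, Finset.Icc_eq_empty (by omega), Finset.sum_empty, mul_zero]
      rw [this, zero_mul, add_zero]
    -- the key identity from formulaB
    have hB := formulaB r s hr hs (m - 1)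
    rw [Nat.sub_add_cancel (by omega : 1 ≤ m),
      show m - 1 + 2 = m + 1 from by omega] at hB
    have hstar : a (m + 1) * ∫ x in r..s, x / Real.log x ^ (m + 1)
        = 2 ^ (m - 1) * a (m + 1) / (m.factorial : ℝ) * (∫ x in r..s, x / Real.log x ^ 2)
          - ∑ k ∈ Finset.Icc 2 m, ((k - 1).factorial : ℝ)
              * (2 ^ (m - k) * a (m + 1) / (m.factorial : ℝ))
              * (s ^ 2 / Real.log s ^ k - r ^ 2 / Real.log r ^ k) := by
      have step1 : a (m + 1) * ∫ x in r..s, x / Real.log x ^ (m + 1)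
          = a (m + 1) / (2 * (m.factorial : ℝ))
            * (2 * (m.factorial : ℝ) * ∫ x in r..s, x / Real.log x ^ (m + 1)) := by
        field_simp
      rw [step1, hB, mul_sub, Finset.mul_sum]
      congr 1
      · rw [show (2 : ℝ) ^ m = 2 * 2 ^ (m - 1) from by
          rw [← pow_succ', Nat.sub_add_cancel (by omega : 1 ≤ m)]]
        field_simp
      · refine Finset.sum_congr rfl (fun j hj => ?_)
        rw [Finset.mem_Icc] at hj
        rw [show m + 1 - j = (m - j) + 1 from by omega, pow_succ]
        field_simp
    rw [h1, h2]
    linarith [hstar]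
end

section
/- For every real number x ≥ 4171, ∫_2^x dt/log t ≥ x/log x + x/(log x)² + 2x/(log x)³ + 6x/(log x)⁴ + 24x/(log x)⁵ + 120x/(log x)⁶ + 720x/(log x)⁷ + 5040x/(log x)⁸ − 1.046. -/
open Filter Asymptotics

section AuxLi
open Real MeasureTheory intervalIntegral

lemma contOn_inv_log {s : Set ℝ} (hs : ∀ t ∈ s, 1 < t) :
    ContinuousOn (fun t : ℝ => 1 / Real.log t) s := by
  intro t ht
  have h1 : (1:ℝ) < t := hs t ht
  exact (continuousAt_const.div (Real.continuousAt_log (by linarith))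
    (ne_of_gt (Real.log_pos h1))).continuousWithinAt

lemma pade_lb {x : ℝ} (hx : 1 ≤ x) : 3*(x^2-1)/(x^2+4*x+1) ≤ Real.log x := by
  have h0 : (0:ℝ) < x := by linarith
  have hlog : Real.log x = ∫ t in (1:ℝ)..x, t⁻¹ := by
    rw [integral_inv_of_pos one_pos h0, div_one]
  have hder : ∀ t ∈ Set.uIcc (1:ℝ) x, HasDerivAt (fun s : ℝ => 3*(s^2-1)/(s^2+4*s+1))
      (12*(t^2+t+1)/(t^2+4*t+1)^2) t := by
    intro t ht
    rw [Set.uIcc_of_le hx] at ht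
    have h1 : (1:ℝ) ≤ t := ht.1
    have hv : t^2+4*t+1 ≠ 0 := by nlinarith
    have hu : HasDerivAt (fun s : ℝ => 3*(s^2-1)) (6*t) t := by
      have h := ((hasDerivAt_pow 2 t).sub_const 1).const_mul (3:ℝ)
      refine h.congr_deriv ?_
      norm_num; ring
    have hw : HasDerivAt (fun s : ℝ => s^2+4*s+1) (2*t+4) t := by
      have h := ((hasDerivAt_pow 2 t).add ((hasDerivAt_id t).const_mul 4)).add_const 1
      refine h.congr_deriv ?_
      norm_num [mul_comm]
    have h := hu.div hw hv
    refine h.congr_deriv ?_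
    field_simp
    ring
  have hint : IntervalIntegrable (fun t : ℝ => 12*(t^2+t+1)/(t^2+4*t+1)^2)
      MeasureTheory.volume 1 x := by
    apply ContinuousOn.intervalIntegrable
    apply ContinuousOn.div (by fun_prop) (by fun_prop)
    intro t ht
    rw [Set.uIcc_of_le hx] at ht
    have h1 : (1:ℝ) ≤ t := ht.1
    exact pow_ne_zero _ (by nlinarith)
  have hint2 : IntervalIntegrable (fun t : ℝ => t⁻¹) MeasureTheory.volume 1 x := by
    apply ContinuousOn.intervalIntegrable
    apply ContinuousOn.inv₀ (by fun_prop)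
    intro t ht
    rw [Set.uIcc_of_le hx] at ht
    have h1 : (1:ℝ) ≤ t := ht.1
    linarith
  have hftc := intervalIntegral.integral_eq_sub_of_hasDerivAt hder hint
  have hmono := intervalIntegral.integral_mono_on hx hint hint2 (fun t ht => by
    have h1 : (1:ℝ) ≤ t := ht.1
    rw [inv_eq_one_div, div_le_div_iff₀ (by nlinarith) (by linarith)]
    nlinarith [sq_nonneg ((t-1)^2)])
  rw [hlog]
  have he : (3*((1:ℝ)^2-1)/((1:ℝ)^2+4*1+1)) = 0 := by norm_num
  rw [hftc] at hmono
  simp only [he] at hmono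
  linarith

lemma log_4171_lb : (8.33591109:ℝ) ≤ Real.log 4171 := by
  have h2 : Real.log 4171 = 12 * Real.log 2 + Real.log (4171/4096) := by
    rw [show (4171:ℝ) = 2^(12:ℕ) * (4171/4096) by norm_num,
      Real.log_mul (by positivity) (by norm_num), Real.log_pow]
    push_cast; ring
  have hp := pade_lb (x := 4171/4096) (by norm_num)
  have hl2 := Real.log_two_gt_d9
  rw [h2]
  norm_num at hp ⊢
  linarith

lemma log_b1_lb : (2.12057281:ℝ) ≤ Real.log 8.33591109 := by
  have h2 : Real.log 8.33591109 = 3 * Real.log 2 + Real.log (8.33591109/8) := by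
    rw [show (8.33591109:ℝ) = 2^(3:ℕ) * (8.33591109/8) by norm_num,
      Real.log_mul (by positivity) (by norm_num), Real.log_pow]
    push_cast; ring
  have hp := pade_lb (x := 8.33591109/8) (by norm_num)
  have hl2 := Real.log_two_gt_d9
  rw [h2]
  norm_num at hp ⊢
  linarith

lemma log_98_lb : (51/433:ℝ) ≤ Real.log (9/8) := by
  have hp := pade_lb (x := 9/8) (by norm_num)
  norm_num at hp ⊢
  linarith

lemma log_a2_ub : Real.log 0.6931471808 ≤ -0.36651254 := by
  have h1 : ((0.6931471808:ℝ))⁻¹ = (9/8)^3 * (80000000000/78953796063) := by norm_num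
  have h2 : Real.log 0.6931471808 = -(3 * Real.log (9/8) + Real.log (80000000000/78953796063)) := by
    have h3 : Real.log (0.6931471808:ℝ) = -Real.log ((0.6931471808:ℝ))⁻¹ := by
      rw [Real.log_inv]; ring
    rw [h3, h1, Real.log_mul (by positivity) (by norm_num), Real.log_pow]
    push_cast; ring
  have hp := pade_lb (x := 80000000000/78953796063) (by norm_num)
  have h98 := log_98_lb
  rw [h2]
  norm_num at hp ⊢
  linarith

lemma hasDerivAt_F {t : ℝ} (ht : 1 < t) :
    HasDerivAt (fun s : ℝ => s / Real.log s + s / Real.log s ^ 2 + 2 * s / Real.log s ^ 3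
      + 6 * s / Real.log s ^ 4 + 24 * s / Real.log s ^ 5 + 120 * s / Real.log s ^ 6
      + 720 * s / Real.log s ^ 7 + 5040 * s / Real.log s ^ 8)
      (1 / Real.log t - 40320 / Real.log t ^ 9) t := by
  have ht0 : t ≠ 0 := by linarith
  have hL : 0 < Real.log t := Real.log_pos ht
  have hLne : Real.log t ≠ 0 := ne_of_gt hL
  have hlog := Real.hasDerivAt_log ht0
  have hid := hasDerivAt_id t
  have d1 : HasDerivAt (fun s : ℝ => s / Real.log s)
      ((1 * Real.log t - t * t⁻¹) / Real.log t ^ 2) t := hid.div hlog hLne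
  have d2 := hid.div (hlog.pow 2) (pow_ne_zero 2 hLne)
  have d3 := ((hid.const_mul (2:ℝ))).div (hlog.pow 3) (pow_ne_zero 3 hLne)
  have d4 := ((hid.const_mul (6:ℝ))).div (hlog.pow 4) (pow_ne_zero 4 hLne)
  have d5 := ((hid.const_mul (24:ℝ))).div (hlog.pow 5) (pow_ne_zero 5 hLne)
  have d6 := ((hid.const_mul (120:ℝ))).div (hlog.pow 6) (pow_ne_zero 6 hLne)
  have d7 := ((hid.const_mul (720:ℝ))).div (hlog.pow 7) (pow_ne_zero 7 hLne)
  have d8 := ((hid.const_mul (5040:ℝ))).div (hlog.pow 8) (pow_ne_zero 8 hLne)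
  have h := ((((((d1.add d2).add d3).add d4).add d5).add d6).add d7).add d8
  refine h.congr_deriv ?_
  have h2 : t * t⁻¹ = 1 := mul_inv_cancel₀ ht0
  simp only [Pi.pow_apply, id_eq]
  field_simp
  ring

lemma hasDerivAt_G {t : ℝ} (ht : 1 < t) :
    HasDerivAt (fun s : ℝ => Real.log (Real.log s)
        + ∑ n ∈ Finset.range 32, Real.log s ^ (n+1) / (((n+1) * Nat.factorial (n+1) : ℕ) : ℝ))
      ((∑ i ∈ Finset.range 33, Real.log t ^ i / (Nat.factorial i : ℝ)) / (t * Real.log t)) t := by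
  have ht0 : t ≠ 0 := by linarith
  have hL : 0 < Real.log t := Real.log_pos ht
  have hLne : Real.log t ≠ 0 := ne_of_gt hL
  have h1 : HasDerivAt (fun s : ℝ => Real.log (Real.log s)) ((Real.log t)⁻¹ * t⁻¹) t :=
    (Real.hasDerivAt_log hLne).comp t (Real.hasDerivAt_log ht0)
  have h2 := HasDerivAt.sum (fun n (_ : n ∈ Finset.range 32) =>
    ((Real.hasDerivAt_log ht0).pow (n+1)).div_const (((n+1) * Nat.factorial (n+1) : ℕ) : ℝ))
  have h := h1.add h2
  refine h.congr_deriv ?_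
  have key : ∀ n ∈ Finset.range 32,
      (((n+1 : ℕ) : ℝ) * Real.log t ^ (n+1-1) * t⁻¹ / (((n+1) * Nat.factorial (n+1) : ℕ) : ℝ))
        = Real.log t ^ (n+1) / ((Nat.factorial (n+1) : ℕ) : ℝ) / (t * Real.log t) := by
    intro n _
    simp only [Nat.add_sub_cancel]
    push_cast
    have hn : ((n:ℝ) + 1) ≠ 0 := by positivity
    have hf : ((Nat.factorial (n+1) : ℝ)) ≠ 0 := by positivity
    field_simp
    ring
  rw [Finset.sum_congr rfl key, ← Finset.sum_div,
    Finset.sum_range_succ' (fun i => Real.log t ^ i / (Nat.factorial i : ℝ)) 32, add_div]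
  have h0 : (Real.log t ^ 0 / ((Nat.factorial 0 : ℕ) : ℝ)) / (t * Real.log t)
      = (Real.log t)⁻¹ * t⁻¹ := by
    simp [Nat.factorial, mul_inv, mul_comm]
  rw [h0]
  ring

lemma s1_bound : (583.23170707:ℝ) ≤ ∑ n ∈ Finset.range 32,
    (8.33591109:ℝ)^(n+1) / (((n+1) * Nat.factorial (n+1) : ℕ) : ℝ) := by
  simp only [Finset.sum_range_succ, Finset.sum_range_zero]
  norm_num [Nat.factorial]

lemma s2_bound : (∑ n ∈ Finset.range 32,
    (0.6931471808:ℝ)^(n+1) / (((n+1) * Nat.factorial (n+1) : ℕ) : ℝ)) ≤ 0.83446104 := by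
  simp only [Finset.sum_range_succ, Finset.sum_range_zero]
  norm_num [Nat.factorial]

lemma G_4171_lb : (2.12057281:ℝ) + 583.23170707 ≤ Real.log (Real.log 4171)
    + ∑ n ∈ Finset.range 32, Real.log 4171 ^ (n+1) / (((n+1) * Nat.factorial (n+1) : ℕ) : ℝ) := by
  have hb1 : (8.33591109:ℝ) ≤ Real.log 4171 := log_4171_lb
  have hll : (2.12057281:ℝ) ≤ Real.log (Real.log 4171) :=
    le_trans log_b1_lb (Real.log_le_log (by norm_num) hb1)
  have hsum : ∑ n ∈ Finset.range 32,
      (8.33591109:ℝ)^(n+1) / (((n+1) * Nat.factorial (n+1) : ℕ) : ℝ)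
      ≤ ∑ n ∈ Finset.range 32,
      Real.log 4171 ^ (n+1) / (((n+1) * Nat.factorial (n+1) : ℕ) : ℝ) := by
    apply Finset.sum_le_sum
    intro n _
    have h1 : (8.33591109:ℝ)^(n+1) ≤ Real.log 4171 ^ (n+1) :=
      pow_le_pow_left₀ (by norm_num) hb1 (n+1)
    have h2 : (0:ℝ) < (((n+1) * Nat.factorial (n+1) : ℕ) : ℝ) := by positivity
    exact div_le_div_of_nonneg_right h1 h2.le 
  linarith [s1_bound]

lemma G_2_ub : Real.log (Real.log 2)
    + ∑ n ∈ Finset.range 32, Real.log 2 ^ (n+1) / (((n+1) * Nat.factorial (n+1) : ℕ) : ℝ)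
    ≤ (-0.36651254:ℝ) + 0.83446104 := by
  have ha2 : Real.log 2 ≤ (0.6931471808:ℝ) := Real.log_two_lt_d9.le
  have hll : Real.log (Real.log 2) ≤ (-0.36651254:ℝ) :=
    le_trans (Real.log_le_log (Real.log_pos one_lt_two) ha2) log_a2_ub
  have hsum : ∑ n ∈ Finset.range 32,
      Real.log 2 ^ (n+1) / (((n+1) * Nat.factorial (n+1) : ℕ) : ℝ)
      ≤ ∑ n ∈ Finset.range 32,
      (0.6931471808:ℝ)^(n+1) / (((n+1) * Nat.factorial (n+1) : ℕ) : ℝ) := by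
    apply Finset.sum_le_sum
    intro n _
    have h1 : Real.log 2 ^ (n+1) ≤ (0.6931471808:ℝ)^(n+1) :=
      pow_le_pow_left₀ (Real.log_nonneg one_le_two) ha2 (n+1)
    have h2 : (0:ℝ) < (((n+1) * Nat.factorial (n+1) : ℕ) : ℝ) := by positivity
    exact div_le_div_of_nonneg_right h1 h2.le
  linarith [s2_bound]

end AuxLi

open Real MeasureTheory intervalIntegral in
theorem li_lower_bound (x : ℝ) (hx : 4171 ≤ x) :
    (∫ t in (2:ℝ)..x, 1 / Real.log t) ≥
      x / Real.log x + x / Real.log x ^ 2 + 2 * x / Real.log x ^ 3 + 6 * x / Real.log x ^ 4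
        + 24 * x / Real.log x ^ 5 + 120 * x / Real.log x ^ 6 + 720 * x / Real.log x ^ 7
        + 5040 * x / Real.log x ^ 8 - 1.046 := by
  have hx2 : (2:ℝ) ≤ 4171 := by norm_num
  have h2x : (2:ℝ) ≤ x := by linarith
  -- subset facts
  have hsub1 : ∀ t ∈ Set.uIcc (2:ℝ) 4171, 1 < t := by
    intro t ht; rw [Set.uIcc_of_le hx2] at ht; linarith [ht.1]
  have hsub2 : ∀ t ∈ Set.uIcc (4171:ℝ) x, 1 < t := by
    intro t ht; rw [Set.uIcc_of_le hx] at ht; linarith [ht.1]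
  -- === Part 1 : lower bound for ∫_2^4171 ===
  have hGder : ∀ t ∈ Set.uIcc (2:ℝ) 4171, HasDerivAt (fun s : ℝ => Real.log (Real.log s)
      + ∑ n ∈ Finset.range 32, Real.log s ^ (n+1) / (((n+1) * Nat.factorial (n+1) : ℕ) : ℝ))
      ((∑ i ∈ Finset.range 33, Real.log t ^ i / (Nat.factorial i : ℝ)) / (t * Real.log t)) t :=
    fun t ht => hasDerivAt_G (hsub1 t ht)
  have hEcont : ContinuousOn (fun t : ℝ =>
      (∑ i ∈ Finset.range 33, Real.log t ^ i / (Nat.factorial i : ℝ)) / (t * Real.log t))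
      (Set.uIcc (2:ℝ) 4171) := by
    have hlogc : ContinuousOn Real.log (Set.uIcc (2:ℝ) 4171) :=
      Real.continuousOn_log.mono (fun t ht => by
        simp only [Set.mem_compl_iff, Set.mem_singleton_iff]
        have := hsub1 t ht; intro h; rw [h] at this; linarith)
    apply ContinuousOn.div
    · apply continuousOn_finset_sum
      intro i _
      exact (hlogc.pow i).div_const _
    · exact continuousOn_id.mul hlogc
    · intro t ht
      have h1 := hsub1 t ht
      have hL : 0 < Real.log t := Real.log_pos h1
      positivity
  have hEint := hEcont.intervalIntegrable (μ := MeasureTheory.volume)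
  have hIint1 : IntervalIntegrable (fun t : ℝ => 1 / Real.log t) MeasureTheory.volume 2 4171 :=
    (contOn_inv_log hsub1).intervalIntegrable
  have hftcG := intervalIntegral.integral_eq_sub_of_hasDerivAt hGder hEint
  have hmonoG := intervalIntegral.integral_mono_on hx2 hEint hIint1 (fun t ht => by
    have h1 : (1:ℝ) < t := by rw [← Set.uIcc_of_le hx2] at ht; exact hsub1 t ht
    have ht0 : (0:ℝ) < t := by linarith
    have hL : 0 < Real.log t := Real.log_pos h1
    have hsum := Real.sum_le_exp_of_nonneg hL.le 33
    rw [Real.exp_log ht0] at hsum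
    rw [div_le_div_iff₀ (by positivity) hL, one_mul]
    calc (∑ i ∈ Finset.range 33, Real.log t ^ i / (Nat.factorial i : ℝ)) * Real.log t
        ≤ t * Real.log t := by
          apply mul_le_mul_of_nonneg_right _ hL.le
          exact hsum
      _ = t * Real.log t := rfl)
  -- === Part 2 : lower bound for ∫_4171^x ===
  have hFder : ∀ t ∈ Set.uIcc (4171:ℝ) x, HasDerivAt (fun s : ℝ => s / Real.log s
      + s / Real.log s ^ 2 + 2 * s / Real.log s ^ 3 + 6 * s / Real.log s ^ 4
      + 24 * s / Real.log s ^ 5 + 120 * s / Real.log s ^ 6 + 720 * s / Real.log s ^ 7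
      + 5040 * s / Real.log s ^ 8)
      (1 / Real.log t - 40320 / Real.log t ^ 9) t :=
    fun t ht => hasDerivAt_F (hsub2 t ht)
  have hFcont : ContinuousOn (fun t : ℝ => 1 / Real.log t - 40320 / Real.log t ^ 9)
      (Set.uIcc (4171:ℝ) x) := by
    have hlogc : ContinuousOn Real.log (Set.uIcc (4171:ℝ) x) :=
      Real.continuousOn_log.mono (fun t ht => by
        simp only [Set.mem_compl_iff, Set.mem_singleton_iff]
        have := hsub2 t ht; intro h; rw [h] at this; linarith)
    have hne : ∀ t ∈ Set.uIcc (4171:ℝ) x, Real.log t ≠ 0 :=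
      fun t ht => ne_of_gt (Real.log_pos (hsub2 t ht))
    apply ContinuousOn.sub
    · exact continuousOn_const.div hlogc hne
    · exact continuousOn_const.div (hlogc.pow 9) (fun t ht => pow_ne_zero 9 (hne t ht))
  have hFint := hFcont.intervalIntegrable (μ := MeasureTheory.volume)
  have hIint2 : IntervalIntegrable (fun t : ℝ => 1 / Real.log t) MeasureTheory.volume 4171 x :=
    (contOn_inv_log hsub2).intervalIntegrable
  have hftcF := intervalIntegral.integral_eq_sub_of_hasDerivAt hFder hFint
  have hmonoF := intervalIntegral.integral_mono_on hx hFint hIint2 (fun t ht => by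
    have h1 : (1:ℝ) < t := by rw [← Set.uIcc_of_le hx] at ht; exact hsub2 t ht
    have hL : 0 < Real.log t := Real.log_pos h1
    have : (0:ℝ) ≤ 40320 / Real.log t ^ 9 := by positivity
    linarith)
  -- === Part 3 : F 4171 ≤ 585.92930788 ===
  have hL4171 : (8.33591109:ℝ) ≤ Real.log 4171 := log_4171_lb
  have hF4171 : (4171:ℝ) / Real.log 4171 + 4171 / Real.log 4171 ^ 2 + 2 * 4171 / Real.log 4171 ^ 3
      + 6 * 4171 / Real.log 4171 ^ 4 + 24 * 4171 / Real.log 4171 ^ 5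
      + 120 * 4171 / Real.log 4171 ^ 6 + 720 * 4171 / Real.log 4171 ^ 7
      + 5040 * 4171 / Real.log 4171 ^ 8 ≤ 585.92930788 := by
    have h0 : (0:ℝ) < 8.33591109 := by norm_num
    have key : ∀ k : ℕ, ∀ c : ℝ, 0 ≤ c →
        c / Real.log 4171 ^ (k+1) ≤ c / (8.33591109:ℝ) ^ (k+1) := by
      intro k c hc
      apply div_le_div_of_nonneg_left hc (by positivity)
      exact pow_le_pow_left₀ h0.le hL4171 (k+1)
    have hLpos : (0:ℝ) < Real.log 4171 := by linarith
    have t1 : (4171:ℝ) / Real.log 4171 ≤ 4171 / 8.33591109 :=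
      div_le_div_of_nonneg_left (by norm_num) (by norm_num) hL4171
    have t2 := key 1 4171 (by norm_num)
    have t3 := key 2 (2*4171) (by norm_num)
    have t4 := key 3 (6*4171) (by norm_num)
    have t5 := key 4 (24*4171) (by norm_num)
    have t6 := key 5 (120*4171) (by norm_num)
    have t7 := key 6 (720*4171) (by norm_num)
    have t8 := key 7 (5040*4171) (by norm_num)
    norm_num only at t2 t3 t4 t5 t6 t7 t8 ⊢
    have hnum : (4171:ℝ) / 8.33591109 + 4171 / 8.33591109^2 + 2*4171 / 8.33591109^3
        + 6*4171 / 8.33591109^4 + 24*4171 / 8.33591109^5 + 120*4171 / 8.33591109^6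
        + 720*4171 / 8.33591109^7 + 5040*4171 / 8.33591109^8 ≤ 585.92930788 := by norm_num
    linarith
  -- === Part 4 : assemble ===
  have hftcG' : (∫ t in (2:ℝ)..4171,
      (∑ i ∈ Finset.range 33, Real.log t ^ i / (Nat.factorial i : ℝ)) / (t * Real.log t))
      = (Real.log (Real.log 4171)
          + ∑ n ∈ Finset.range 32, Real.log 4171 ^ (n+1) / (((n+1) * Nat.factorial (n+1) : ℕ) : ℝ))
        - (Real.log (Real.log 2)
          + ∑ n ∈ Finset.range 32, Real.log 2 ^ (n+1) / (((n+1) * Nat.factorial (n+1) : ℕ) : ℝ)) :=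
    hftcG
  have hftcF' : (∫ t in (4171:ℝ)..x, (1 / Real.log t - 40320 / Real.log t ^ 9))
      = (x / Real.log x + x / Real.log x ^ 2 + 2 * x / Real.log x ^ 3 + 6 * x / Real.log x ^ 4
        + 24 * x / Real.log x ^ 5 + 120 * x / Real.log x ^ 6 + 720 * x / Real.log x ^ 7
        + 5040 * x / Real.log x ^ 8)
        - ((4171:ℝ) / Real.log 4171 + 4171 / Real.log 4171 ^ 2 + 2 * 4171 / Real.log 4171 ^ 3
        + 6 * 4171 / Real.log 4171 ^ 4 + 24 * 4171 / Real.log 4171 ^ 5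
        + 120 * 4171 / Real.log 4171 ^ 6 + 720 * 4171 / Real.log 4171 ^ 7
        + 5040 * 4171 / Real.log 4171 ^ 8) :=
    hftcF
  have hsplit := intervalIntegral.integral_add_adjacent_intervals hIint1 hIint2
  have hg1 := G_4171_lb
  have hg2 := G_2_ub
  rw [ge_iff_le, ← hsplit]
  rw [hftcG'] at hmonoG
  rw [hftcF'] at hmonoF
  linarith
end

section
/- For every real number x ≥ 10^16, ∫_2^x dt/log t ≤ x/log x + x/(log x)² + 2x/(log x)³ + 6x/(log x)⁴ + 24x/(log x)⁵ + 120x/(log x)⁶ + 900x/(log x)⁷. -/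
open Filter Asymptotics

open intervalIntegral MeasureTheory

noncomputable def gg (t : ℝ) : ℝ := 180 / Real.log t ^ 7 - 6300 / Real.log t ^ 8

noncomputable def FF (t : ℝ) : ℝ :=
  t / Real.log t + t / Real.log t ^ 2 + 2 * t / Real.log t ^ 3 + 6 * t / Real.log t ^ 4
    + 24 * t / Real.log t ^ 5 + 120 * t / Real.log t ^ 6 + 900 * t / Real.log t ^ 7

lemma f_mono : MonotoneOn (fun L : ℝ => 180 / L ^ 7 - 6300 / L ^ 8) (Set.Icc (1/2 : ℝ) 40) := by
  have hderiv : ∀ L : ℝ, L ≠ 0 →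
      HasDerivAt (fun L : ℝ => 180 / L ^ 7 - 6300 / L ^ 8)
        ((50400 - 1260 * L) / L ^ 9) L := by
    intro L hL
    have h1 : HasDerivAt (fun L : ℝ => 180 / L ^ 7)
        ((0 * L ^ 7 - 180 * (7 * L ^ 6 * 1)) / (L ^ 7) ^ 2) L :=
      (hasDerivAt_const L (180:ℝ)).div ((hasDerivAt_id L).pow 7) (pow_ne_zero 7 hL)
    have h2 : HasDerivAt (fun L : ℝ => 6300 / L ^ 8)
        ((0 * L ^ 8 - 6300 * (8 * L ^ 7 * 1)) / (L ^ 8) ^ 2) L :=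
      (hasDerivAt_const L (6300:ℝ)).div ((hasDerivAt_id L).pow 8) (pow_ne_zero 8 hL)
    have this : HasDerivAt (fun L : ℝ => 180 / L ^ 7 - 6300 / L ^ 8) _ L := h1.sub h2
    convert this using 1
    field_simp
    ring
  apply monotoneOn_of_deriv_nonneg (convex_Icc _ _)
  · apply ContinuousOn.sub
    · exact continuousOn_const.div (continuousOn_pow 7)
        (fun L hL => pow_ne_zero 7 (by have := hL.1; intro h; rw [h] at this; norm_num at this))
    · exact continuousOn_const.div (continuousOn_pow 8)
        (fun L hL => pow_ne_zero 8 (by have := hL.1; intro h; rw [h] at this; norm_num at this))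
  · intro L hL
    rw [interior_Icc] at hL
    exact ((hderiv L (by linarith [hL.1])).differentiableAt).differentiableWithinAt
  · intro L hL
    rw [interior_Icc] at hL
    rw [(hderiv L (by linarith [hL.1])).deriv]
    apply div_nonneg
    · linarith [hL.2]
    · exact pow_nonneg (by linarith [hL.1]) 9

lemma log_lb {a : ℝ} (L : ℝ) (p q : ℕ) (hq : 0 < q) (hL : L = p / q)
    (h : (2.71829 : ℝ) ^ p ≤ a ^ q) (ha : 1 ≤ a) : L ≤ Real.log a := by
  have ha0 : (0:ℝ) < a := by linarith
  rw [Real.le_log_iff_exp_le ha0, hL]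
  have hexp : Real.exp ((p : ℝ) / q) ^ q ≤ a ^ q := by
    rw [← Real.exp_nat_mul]
    have : (q : ℝ) * ((p:ℝ)/q) = (p:ℝ) := by
      field_simp
    rw [this]
    calc Real.exp (p:ℝ) = Real.exp 1 ^ p := by
          rw [← Real.exp_nat_mul]; norm_num
      _ ≤ (2.71829 : ℝ) ^ p := by
          apply pow_le_pow_left₀ (Real.exp_pos 1).le
          linarith [Real.exp_one_lt_d9]
      _ ≤ a ^ q := h
  exact le_of_pow_le_pow_left₀ hq.ne' ha0.le hexp

lemma log_ub_40 {t : ℝ} (ht : 0 < t) (h : t ≤ 1e16) : Real.log t ≤ 40 := by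
  have h1 : (1e16 : ℝ) ≤ Real.exp 40 := by
    calc (1e16:ℝ) ≤ (2.7182818283:ℝ) ^ (40:ℕ) := by norm_num
      _ ≤ Real.exp 1 ^ (40:ℕ) := by
          apply pow_le_pow_left₀ (by norm_num)
          linarith [Real.exp_one_gt_d9]
      _ = Real.exp 40 := by rw [← Real.exp_nat_mul]; norm_num
  calc Real.log t ≤ Real.log (1e16) := Real.log_le_log ht h
    _ ≤ 40 := by
        rw [← Real.log_exp 40]
        exact Real.log_le_log (by norm_num) h1

lemma gg_contOn {a b : ℝ} (ha : 2 ≤ a) (hb : 2 ≤ b) :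
    IntervalIntegrable gg MeasureTheory.volume a b := by
  apply ContinuousOn.intervalIntegrable
  have hsub : Set.uIcc a b ⊆ Set.Ici (2:ℝ) := fun t ht =>
    le_trans (le_inf ha hb) ht.1
  have hlog : ∀ t ∈ Set.uIcc a b, Real.log t ≠ 0 := by
    intro t ht
    have h2 : (2:ℝ) ≤ t := hsub ht
    have : (0:ℝ) < Real.log t := Real.log_pos (by linarith)
    linarith
  unfold gg
  apply ContinuousOn.sub
  · exact continuousOn_const.div
      ((Real.continuousOn_log.mono (fun t ht => by
        have : (2:ℝ) ≤ t := hsub ht; simp; linarith)).pow 7)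
      (fun t ht => pow_ne_zero 7 (hlog t ht))
  · exact continuousOn_const.div
      ((Real.continuousOn_log.mono (fun t ht => by
        have : (2:ℝ) ≤ t := hsub ht; simp; linarith)).pow 8)
      (fun t ht => pow_ne_zero 8 (hlog t ht))

lemma piece {a b L m : ℝ} (ha : 2 ≤ a) (hab : a ≤ b) (hb : b ≤ 1e16)
    (hL : L ≤ Real.log a) (hL' : 0.69 ≤ L) (hm : m ≤ 180 / L ^ 7 - 6300 / L ^ 8) :
    m * (b - a) ≤ ∫ t in a..b, gg t := by
  have key : ∀ t ∈ Set.Icc a b, m ≤ gg t := by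
    intro t ht
    have ht2 : 2 ≤ t := le_trans ha ht.1
    have hlt : L ≤ Real.log t := le_trans hL
      (Real.log_le_log (by linarith) ht.1)
    have h40 : Real.log t ≤ 40 := log_ub_40 (by linarith) (le_trans ht.2 hb)
    have := f_mono (Set.mem_Icc.2 ⟨by linarith, by linarith⟩)
      (Set.mem_Icc.2 ⟨by linarith, h40⟩) hlt
    simpa [gg] using le_trans hm this
  calc m * (b - a) = ∫ _ in a..b, m := by rw [intervalIntegral.integral_const]; simp [smul_eq_mul]; ring
    _ ≤ ∫ t in a..b, gg t := by
        apply intervalIntegral.integral_mono_on hab intervalIntegrable_const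
          (gg_contOn ha (by linarith)) key

lemma FF_deriv {t : ℝ} (ht : 2 ≤ t) :
    HasDerivAt FF (1 / Real.log t + gg t) t := by
  have ht0 : t ≠ 0 := by linarith
  have hL : (0:ℝ) < Real.log t := Real.log_pos (by linarith)
  have hLn : Real.log t ≠ 0 := hL.ne'
  have hlog : HasDerivAt Real.log t⁻¹ t := Real.hasDerivAt_log ht0
  have term : ∀ (c : ℝ) (k : ℕ), 0 < k →
      HasDerivAt (fun s => c * s / Real.log s ^ k)
        ((c * Real.log t ^ k - c * t * (k * Real.log t ^ (k-1) * t⁻¹)) / (Real.log t ^ k) ^ 2) t := by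
    intro c k hk
    have hnum : HasDerivAt (fun s : ℝ => c * s) c t := by
      simpa using (hasDerivAt_id t).const_mul c
    have hden : HasDerivAt (fun s => Real.log s ^ k) (k * Real.log t ^ (k-1) * t⁻¹) t :=
      hlog.pow k
    exact hnum.div hden (pow_ne_zero k hLn)
  have h1 : HasDerivAt (fun s : ℝ => s / Real.log s)
      ((1 * Real.log t ^ 1 - 1 * t * (1 * Real.log t ^ 0 * t⁻¹)) / (Real.log t ^ 1) ^ 2) t := by
    have := term 1 1 (by norm_num)
    simpa using this
  have h2 := term 1 2 (by norm_num)
  have h3 := term 2 3 (by norm_num)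
  have h4 := term 6 4 (by norm_num)
  have h5 := term 24 5 (by norm_num)
  have h6 := term 120 6 (by norm_num)
  have h7 := term 900 7 (by norm_num)
  have h2' : HasDerivAt (fun s : ℝ => s / Real.log s ^ 2)
      ((1 * Real.log t ^ 2 - 1 * t * (2 * Real.log t ^ 1 * t⁻¹)) / (Real.log t ^ 2) ^ 2) t := by
    simpa using h2
  have this : HasDerivAt FF _ t := ((((((h1.add h2').add h3).add h4).add h5).add h6).add h7)
  convert this using 1
  unfold gg
  push_cast
  field_simp
  ring

lemma invlog_int {a b : ℝ} (ha : 2 ≤ a) (hb : 2 ≤ b) :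
    IntervalIntegrable (fun t => 1 / Real.log t) MeasureTheory.volume a b := by
  apply ContinuousOn.intervalIntegrable
  have hsub : Set.uIcc a b ⊆ Set.Ici (2:ℝ) := fun t ht =>
    le_trans (le_inf ha hb) ht.1
  exact continuousOn_const.div
    (Real.continuousOn_log.mono (fun t ht => by
      have : (2:ℝ) ≤ t := hsub ht; simp; linarith))
    (fun t ht => by
      have h2 : (2:ℝ) ≤ t := hsub ht
      have : (0:ℝ) < Real.log t := Real.log_pos (by linarith)
      linarith)

lemma gg_nonneg {t : ℝ} (ht : (1e16:ℝ) ≤ t) : 0 ≤ gg t := by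
  have h35 : (35:ℝ) ≤ Real.log (1e16:ℝ) := by
    apply log_lb (a := (1e16:ℝ)) 35 35 1 (by norm_num) (by norm_num) (by norm_num) (by norm_num)
  have hL : (35:ℝ) ≤ Real.log t := le_trans h35 (Real.log_le_log (by norm_num) ht)
  have hL0 : (0:ℝ) < Real.log t := by linarith
  unfold gg
  rw [sub_nonneg, div_le_div_iff₀ (by positivity) (by positivity)]
  nlinarith [pow_pos hL0 7]

lemma F2_lb : (25900:ℝ) ≤ FF 2 := by
  have h0 : (0:ℝ) < Real.log 2 := Real.log_pos (by norm_num)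
  have hl : Real.log 2 ≤ 0.6931471808 := le_of_lt Real.log_two_lt_d9
  unfold FF
  have : (2:ℝ) / (0.6931471808:ℝ) + 2 / (0.6931471808:ℝ) ^ 2 + 2 * 2 / (0.6931471808:ℝ) ^ 3
      + 6 * 2 / (0.6931471808:ℝ) ^ 4 + 24 * 2 / (0.6931471808:ℝ) ^ 5
      + 120 * 2 / (0.6931471808:ℝ) ^ 6 + 900 * 2 / (0.6931471808:ℝ) ^ 7
      ≤ 2 / Real.log 2 + 2 / Real.log 2 ^ 2 + 2 * 2 / Real.log 2 ^ 3 + 6 * 2 / Real.log 2 ^ 4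
        + 24 * 2 / Real.log 2 ^ 5 + 120 * 2 / Real.log 2 ^ 6 + 900 * 2 / Real.log 2 ^ 7 := by
    gcongr <;> norm_num
  refine le_trans (by norm_num) this

set_option maxHeartbeats 4000000 in
lemma riemann : (-25900 : ℝ) ≤ ∫ t in (2:ℝ)..(1e16:ℝ), gg t := by
  have T63 : (82570.528557:ℝ) ≤ ∫ t in (9127886000000000:ℝ)..(1e16:ℝ), gg t := by
    have hp := piece (a := 9127886000000000) (b := 1e16) (L := 36.75) (m := 0.00000000009467859541) (by norm_num) (by norm_num) (by norm_num) (log_lb _ 147 4 (by norm_num) (by norm_num) (by norm_num) (by norm_num)) (by norm_num) (by norm_num)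
    norm_num at hp
    linarith
  have T62 : (255622.147254:ℝ) ≤ ∫ t in (7108800000000000:ℝ)..(1e16:ℝ), gg t := by
    have hp := piece (a := 7108800000000000) (b := 9127886000000000) (L := 36.5) (m := 0.00000000008570789887) (by norm_num) (by norm_num) (by norm_num) (log_lb _ 146 4 (by norm_num) (by norm_num) (by norm_num) (by norm_num)) (by norm_num) (by norm_num)
    norm_num at hp
    have ha := intervalIntegral.integral_add_adjacent_intervals (a := (7108800000000000:ℝ)) (b := 9127886000000000) (c := (1e16:ℝ)) (μ := MeasureTheory.volume) (f := gg) (gg_contOn (by norm_num) (by norm_num)) (gg_contOn (by norm_num) (by norm_num))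
    linarith [T63]
  have T61 : (374280.801491:ℝ) ≤ ∫ t in (5536335000000000:ℝ)..(1e16:ℝ), gg t := by
    have hp := piece (a := 5536335000000000) (b := 7108800000000000) (L := 36.25) (m := 0.00000000007546028321) (by norm_num) (by norm_num) (by norm_num) (log_lb _ 145 4 (by norm_num) (by norm_num) (by norm_num) (by norm_num)) (by norm_num) (by norm_num)
    norm_num at hp
    have ha := intervalIntegral.integral_add_adjacent_intervals (a := (5536335000000000:ℝ)) (b := 7108800000000000) (c := (1e16:ℝ)) (μ := MeasureTheory.volume) (f := gg) (gg_contOn (by norm_num) (by norm_num)) (gg_contOn (by norm_num) (by norm_num))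
    linarith [T62]
  have T60 : (452418.303121:ℝ) ≤ ∫ t in (4311699000000000:ℝ)..(1e16:ℝ), gg t := by
    have hp := piece (a := 4311699000000000) (b := 5536335000000000) (L := 36) (m := 0.00000000006380467472) (by norm_num) (by norm_num) (by norm_num) (log_lb _ 36 1 (by norm_num) (by norm_num) (by norm_num) (by norm_num)) (by norm_num) (by norm_num)
    norm_num at hp
    have ha := intervalIntegral.integral_add_adjacent_intervals (a := (4311699000000000:ℝ)) (b := 5536335000000000) (c := (1e16:ℝ)) (μ := MeasureTheory.volume) (f := gg) (gg_contOn (by norm_num) (by norm_num)) (gg_contOn (by norm_num) (by norm_num))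
    linarith [T61]
  have T59 : (500675.110304:ℝ) ≤ ∫ t in (3357952000000000:ℝ)..(1e16:ℝ), gg t := by
    have hp := piece (a := 3357952000000000) (b := 4311699000000000) (L := 35.75) (m := 0.00000000005059707363) (by norm_num) (by norm_num) (by norm_num) (log_lb _ 143 4 (by norm_num) (by norm_num) (by norm_num) (by norm_num)) (by norm_num) (by norm_num)
    norm_num at hp
    have ha := intervalIntegral.integral_add_adjacent_intervals (a := (3357952000000000:ℝ)) (b := 4311699000000000) (c := (1e16:ℝ)) (μ := MeasureTheory.volume) (f := gg) (gg_contOn (by norm_num) (by norm_num)) (gg_contOn (by norm_num) (by norm_num))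
    linarith [T60]
  have T58 : (527176.870321:ℝ) ≤ ∫ t in (2615174000000000:ℝ)..(1e16:ℝ), gg t := by
    have hp := piece (a := 2615174000000000) (b := 3357952000000000) (L := 35.5) (m := 0.00000000003567924739) (by norm_num) (by norm_num) (by norm_num) (log_lb _ 142 4 (by norm_num) (by norm_num) (by norm_num) (by norm_num)) (by norm_num) (by norm_num)
    norm_num at hp
    have ha := intervalIntegral.integral_add_adjacent_intervals (a := (2615174000000000:ℝ)) (b := 3357952000000000) (c := (1e16:ℝ)) (μ := MeasureTheory.volume) (f := gg) (gg_contOn (by norm_num) (by norm_num)) (gg_contOn (by norm_num) (by norm_num))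
    linarith [T59]
  have T57 : (538096.926898:ℝ) ≤ ∫ t in (2036698000000000:ℝ)..(1e16:ℝ), gg t := by
    have hp := piece (a := 2036698000000000) (b := 2615174000000000) (L := 35.25) (m := 0.00000000001887728545) (by norm_num) (by norm_num) (by norm_num) (log_lb _ 141 4 (by norm_num) (by norm_num) (by norm_num) (by norm_num)) (by norm_num) (by norm_num)
    norm_num at hp
    have ha := intervalIntegral.integral_add_adjacent_intervals (a := (2036698000000000:ℝ)) (b := 2615174000000000) (c := (1e16:ℝ)) (μ := MeasureTheory.volume) (f := gg) (gg_contOn (by norm_num) (by norm_num)) (gg_contOn (by norm_num) (by norm_num))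
    linarith [T58]
  have T56 : (538096.926898:ℝ) ≤ ∫ t in (1586181000000000:ℝ)..(1e16:ℝ), gg t := by
    have hp := piece (a := 1586181000000000) (b := 2036698000000000) (L := 35) (m := 0) (by norm_num) (by norm_num) (by norm_num) (log_lb _ 35 1 (by norm_num) (by norm_num) (by norm_num) (by norm_num)) (by norm_num) (by norm_num)
    norm_num at hp
    have ha := intervalIntegral.integral_add_adjacent_intervals (a := (1586181000000000:ℝ)) (b := 2036698000000000) (c := (1e16:ℝ)) (μ := MeasureTheory.volume) (f := gg) (gg_contOn (by norm_num) (by norm_num)) (gg_contOn (by norm_num) (by norm_num))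
    linarith [T57]
  have T55 : (530671.66776:ℝ) ≤ ∫ t in (1235318000000000:ℝ)..(1e16:ℝ), gg t := by
    have hp := piece (a := 1235318000000000) (b := 1586181000000000) (L := 34.75) (m := -0.00000000002116284458) (by norm_num) (by norm_num) (by norm_num) (log_lb _ 139 4 (by norm_num) (by norm_num) (by norm_num) (by norm_num)) (by norm_num) (by norm_num)
    norm_num at hp
    have ha := intervalIntegral.integral_add_adjacent_intervals (a := (1235318000000000:ℝ)) (b := 1586181000000000) (c := (1e16:ℝ)) (μ := MeasureTheory.volume) (f := gg) (gg_contOn (by norm_num) (by norm_num)) (gg_contOn (by norm_num) (by norm_num))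
    linarith [T56]
  have T54 : (518418.348928:ℝ) ≤ ∫ t in (962065600000000:ℝ)..(1e16:ℝ), gg t := by
    have hp := piece (a := 962065600000000) (b := 1235318000000000) (L := 34.5) (m := -0.00000000004484249299) (by norm_num) (by norm_num) (by norm_num) (log_lb _ 138 4 (by norm_num) (by norm_num) (by norm_num) (by norm_num)) (by norm_num) (by norm_num)
    norm_num at hp
    have ha := intervalIntegral.integral_add_adjacent_intervals (a := (962065600000000:ℝ)) (b := 1235318000000000) (c := (1e16:ℝ)) (μ := MeasureTheory.volume) (f := gg) (gg_contOn (by norm_num) (by norm_num)) (gg_contOn (by norm_num) (by norm_num))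
    linarith [T55]
  have T53 : (503246.498916:ℝ) ≤ ∫ t in (749256900000000:ℝ)..(1e16:ℝ), gg t := by
    have hp := piece (a := 749256900000000) (b := 962065600000000) (L := 34.25) (m := -0.00000000007129337293) (by norm_num) (by norm_num) (by norm_num) (log_lb _ 137 4 (by norm_num) (by norm_num) (by norm_num) (by norm_num)) (by norm_num) (by norm_num)
    norm_num at hp
    have ha := intervalIntegral.integral_add_adjacent_intervals (a := (749256900000000:ℝ)) (b := 962065600000000) (c := (1e16:ℝ)) (μ := MeasureTheory.volume) (f := gg) (gg_contOn (by norm_num) (by norm_num)) (gg_contOn (by norm_num) (by norm_num))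
    linarith [T54]
  have T52 : (486541.105354:ℝ) ≤ ∫ t in (583521400000000:ℝ)..(1e16:ℝ), gg t := by
    have hp := piece (a := 583521400000000) (b := 749256900000000) (L := 34) (m := -0.00000000010079550586) (by norm_num) (by norm_num) (by norm_num) (log_lb _ 34 1 (by norm_num) (by norm_num) (by norm_num) (by norm_num)) (by norm_num) (by norm_num)
    norm_num at hp
    have ha := intervalIntegral.integral_add_adjacent_intervals (a := (583521400000000:ℝ)) (b := 749256900000000) (c := (1e16:ℝ)) (μ := MeasureTheory.volume) (f := gg) (gg_contOn (by norm_num) (by norm_num)) (gg_contOn (by norm_num) (by norm_num))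
    linarith [T53]
  have T51 : (469289.331299:ℝ) ≤ ∫ t in (454446600000000:ℝ)..(1e16:ℝ), gg t := by
    have hp := piece (a := 454446600000000) (b := 583521400000000) (L := 33.75) (m := -0.00000000013365718215) (by norm_num) (by norm_num) (by norm_num) (log_lb _ 135 4 (by norm_num) (by norm_num) (by norm_num) (by norm_num)) (by norm_num) (by norm_num)
    norm_num at hp
    have ha := intervalIntegral.integral_add_adjacent_intervals (a := (454446600000000:ℝ)) (b := 583521400000000) (c := (1e16:ℝ)) (μ := MeasureTheory.volume) (f := gg) (gg_contOn (by norm_num) (by norm_num)) (gg_contOn (by norm_num) (by norm_num))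
    linarith [T52]
  have T50 : (452178.429092:ℝ) ≤ ∫ t in (353923100000000:ℝ)..(1e16:ℝ), gg t := by
    have hp := piece (a := 353923100000000) (b := 454446600000000) (L := 33.5) (m := -0.0000000001702179312) (by norm_num) (by norm_num) (by norm_num) (log_lb _ 134 4 (by norm_num) (by norm_num) (by norm_num) (by norm_num)) (by norm_num) (by norm_num)
    norm_num at hp
    have ha := intervalIntegral.integral_add_adjacent_intervals (a := (353923100000000:ℝ)) (b := 454446600000000) (c := (1e16:ℝ)) (μ := MeasureTheory.volume) (f := gg) (gg_contOn (by norm_num) (by norm_num)) (gg_contOn (by norm_num) (by norm_num))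
    linarith [T51]
  have T49 : (435671.324963:ℝ) ≤ ∫ t in (275635400000000:ℝ)..(1e16:ℝ), gg t := by
    have hp := piece (a := 275635400000000) (b := 353923100000000) (L := 33.25) (m := -0.00000000021085182128) (by norm_num) (by norm_num) (by norm_num) (log_lb _ 133 4 (by norm_num) (by norm_num) (by norm_num) (by norm_num)) (by norm_num) (by norm_num)
    norm_num at hp
    have ha := intervalIntegral.integral_add_adjacent_intervals (a := (275635400000000:ℝ)) (b := 353923100000000) (c := (1e16:ℝ)) (μ := MeasureTheory.volume) (f := gg) (gg_contOn (by norm_num) (by norm_num)) (gg_contOn (by norm_num) (by norm_num))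
    linarith [T50]
  have T48 : (420064.637322:ℝ) ≤ ∫ t in (214664900000000:ℝ)..(1e16:ℝ), gg t := by
    have hp := piece (a := 214664900000000) (b := 275635400000000) (L := 33) (m := -0.00000000025597112769) (by norm_num) (by norm_num) (by norm_num) (log_lb _ 33 1 (by norm_num) (by norm_num) (by norm_num) (by norm_num)) (by norm_num) (by norm_num)
    norm_num at hp
    have ha := intervalIntegral.integral_add_adjacent_intervals (a := (214664900000000:ℝ)) (b := 275635400000000) (c := (1e16:ℝ)) (μ := MeasureTheory.volume) (f := gg) (gg_contOn (by norm_num) (by norm_num)) (gg_contOn (by norm_num) (by norm_num))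
    linarith [T49]
  have T47 : (405533.15039:ℝ) ≤ ∫ t in (167181100000000:ℝ)..(1e16:ℝ), gg t := by
    have hp := piece (a := 167181100000000) (b := 214664900000000) (L := 32.75) (m := -0.00000000030603041315) (by norm_num) (by norm_num) (by norm_num) (log_lb _ 131 4 (by norm_num) (by norm_num) (by norm_num) (by norm_num)) (by norm_num) (by norm_num)
    norm_num at hp
    have ha := intervalIntegral.integral_add_adjacent_intervals (a := (167181100000000:ℝ)) (b := 214664900000000) (c := (1e16:ℝ)) (μ := MeasureTheory.volume) (f := gg) (gg_contOn (by norm_num) (by norm_num)) (gg_contOn (by norm_num) (by norm_num))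
    linarith [T48]
  have T46 : (392163.586826:ℝ) ≤ ∫ t in (130200700000000:ℝ)..(1e16:ℝ), gg t := by
    have hp := piece (a := 130200700000000) (b := 167181100000000) (L := 32.5) (m := -0.00000000036153106952) (by norm_num) (by norm_num) (by norm_num) (log_lb _ 130 4 (by norm_num) (by norm_num) (by norm_num) (by norm_num)) (by norm_num) (by norm_num)
    norm_num at hp
    have ha := intervalIntegral.integral_add_adjacent_intervals (a := (130200700000000:ℝ)) (b := 167181100000000) (c := (1e16:ℝ)) (μ := MeasureTheory.volume) (f := gg) (gg_contOn (by norm_num) (by norm_num)) (gg_contOn (by norm_num) (by norm_num))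
    linarith [T47]
  have T45 : (379980.257976:ℝ) ≤ ∫ t in (101400300000000:ℝ)..(1e16:ℝ), gg t := by
    have hp := piece (a := 101400300000000) (b := 130200700000000) (L := 32.25) (m := -0.00000000042302637636) (by norm_num) (by norm_num) (by norm_num) (log_lb _ 129 4 (by norm_num) (by norm_num) (by norm_num) (by norm_num)) (by norm_num) (by norm_num)
    norm_num at hp
    have ha := intervalIntegral.integral_add_adjacent_intervals (a := (101400300000000:ℝ)) (b := 130200700000000) (c := (1e16:ℝ)) (μ := MeasureTheory.volume) (f := gg) (gg_contOn (by norm_num) (by norm_num)) (gg_contOn (by norm_num) (by norm_num))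
    linarith [T46]
  have T44 : (368964.403942:ℝ) ≤ ∫ t in (78970560000000:ℝ)..(1e16:ℝ), gg t := by
    have hp := piece (a := 78970560000000) (b := 101400300000000) (L := 32) (m := -0.00000000049112713896) (by norm_num) (by norm_num) (by norm_num) (log_lb _ 32 1 (by norm_num) (by norm_num) (by norm_num) (by norm_num)) (by norm_num) (by norm_num)
    norm_num at hp
    have ha := intervalIntegral.integral_add_adjacent_intervals (a := (78970560000000:ℝ)) (b := 101400300000000) (c := (1e16:ℝ)) (μ := MeasureTheory.volume) (f := gg) (gg_contOn (by norm_num) (by norm_num)) (gg_contOn (by norm_num) (by norm_num))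
    linarith [T45]
  have T43 : (359068.489653:ℝ) ≤ ∫ t in (61502290000000:ℝ)..(1e16:ℝ), gg t := by
    have hp := piece (a := 61502290000000) (b := 78970560000000) (L := 31.75) (m := -0.00000000056650797637) (by norm_num) (by norm_num) (by norm_num) (log_lb _ 127 4 (by norm_num) (by norm_num) (by norm_num) (by norm_num)) (by norm_num) (by norm_num)
    norm_num at hp
    have ha := intervalIntegral.integral_add_adjacent_intervals (a := (61502290000000:ℝ)) (b := 78970560000000) (c := (1e16:ℝ)) (μ := MeasureTheory.volume) (f := gg) (gg_contOn (by norm_num) (by norm_num)) (gg_contOn (by norm_num) (by norm_num))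
    linarith [T44]
  have T42 : (350226.866504:ℝ) ≤ ∫ t in (47898000000000:ℝ)..(1e16:ℝ), gg t := by
    have hp := piece (a := 47898000000000) (b := 61502290000000) (L := 31.5) (m := -0.0000000006499143394) (by norm_num) (by norm_num) (by norm_num) (log_lb _ 126 4 (by norm_num) (by norm_num) (by norm_num) (by norm_num)) (by norm_num) (by norm_num)
    norm_num at hp
    have ha := intervalIntegral.integral_add_adjacent_intervals (a := (47898000000000:ℝ)) (b := 61502290000000) (c := (1e16:ℝ)) (μ := MeasureTheory.volume) (f := gg) (gg_contOn (by norm_num) (by norm_num)) (gg_contOn (by norm_num) (by norm_num))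
    linarith [T43]
  have T41 : (342363.549393:ℝ) ≤ ∫ t in (37302970000000:ℝ)..(1e16:ℝ), gg t := by
    have hp := piece (a := 37302970000000) (b := 47898000000000) (L := 31.25) (m := -0.00000000074217034875) (by norm_num) (by norm_num) (by norm_num) (log_lb _ 125 4 (by norm_num) (by norm_num) (by norm_num) (by norm_num)) (by norm_num) (by norm_num)
    norm_num at hp
    have ha := intervalIntegral.integral_add_adjacent_intervals (a := (37302970000000:ℝ)) (b := 47898000000000) (c := (1e16:ℝ)) (μ := MeasureTheory.volume) (f := gg) (gg_contOn (by norm_num) (by norm_num)) (gg_contOn (by norm_num) (by norm_num))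
    linarith [T42]
  have T40 : (335397.811755:ℝ) ≤ ∫ t in (29051560000000:ℝ)..(1e16:ℝ), gg t := by
    have hp := piece (a := 29051560000000) (b := 37302970000000) (L := 31) (m := -0.0000000008441875555) (by norm_num) (by norm_num) (by norm_num) (log_lb _ 31 1 (by norm_num) (by norm_num) (by norm_num) (by norm_num)) (by norm_num) (by norm_num)
    norm_num at hp
    have ha := intervalIntegral.integral_add_adjacent_intervals (a := (29051560000000:ℝ)) (b := 37302970000000) (c := (1e16:ℝ)) (μ := MeasureTheory.volume) (f := gg) (gg_contOn (by norm_num) (by norm_num)) (gg_contOn (by norm_num) (by norm_num))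
    linarith [T41]
  have T39 : (329248.100683:ℝ) ≤ ∫ t in (22625360000000:ℝ)..(1e16:ℝ), gg t := by
    have hp := piece (a := 22625360000000) (b := 29051560000000) (L := 30.75) (m := -0.00000000095697473964) (by norm_num) (by norm_num) (by norm_num) (log_lb _ 123 4 (by norm_num) (by norm_num) (by norm_num) (by norm_num)) (by norm_num) (by norm_num)
    norm_num at hp
    have ha := intervalIntegral.integral_add_adjacent_intervals (a := (22625360000000:ℝ)) (b := 29051560000000) (c := (1e16:ℝ)) (μ := MeasureTheory.volume) (f := gg) (gg_contOn (by norm_num) (by norm_num)) (gg_contOn (by norm_num) (by norm_num))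
    linarith [T40]
  have T38 : (323834.75091:ℝ) ≤ ∫ t in (17620640000000:ℝ)..(1e16:ℝ), gg t := by
    have hp := piece (a := 17620640000000) (b := 22625360000000) (L := 30.5) (m := -0.00000000108164887796) (by norm_num) (by norm_num) (by norm_num) (log_lb _ 122 4 (by norm_num) (by norm_num) (by norm_num) (by norm_num)) (by norm_num) (by norm_num)
    norm_num at hp
    have ha := intervalIntegral.integral_add_adjacent_intervals (a := (17620640000000:ℝ)) (b := 22625360000000) (c := (1e16:ℝ)) (μ := MeasureTheory.volume) (f := gg) (gg_contOn (by norm_num) (by norm_num)) (gg_contOn (by norm_num) (by norm_num))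
    linarith [T39]
  have T37 : (319081.73505:ℝ) ≤ ∫ t in (13722960000000:ℝ)..(1e16:ℝ), gg t := by
    have hp := piece (a := 13722960000000) (b := 17620640000000) (L := 30.25) (m := -0.00000000121944743019) (by norm_num) (by norm_num) (by norm_num) (log_lb _ 121 4 (by norm_num) (by norm_num) (by norm_num) (by norm_num)) (by norm_num) (by norm_num)
    norm_num at hp
    have ha := intervalIntegral.integral_add_adjacent_intervals (a := (13722960000000:ℝ)) (b := 17620640000000) (c := (1e16:ℝ)) (μ := MeasureTheory.volume) (f := gg) (gg_contOn (by norm_num) (by norm_num)) (gg_contOn (by norm_num) (by norm_num))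
    linarith [T38]
  have T36 : (314917.784432:ℝ) ≤ ∫ t in (10687440000000:ℝ)..(1e16:ℝ), gg t := by
    have hp := piece (a := 10687440000000) (b := 13722960000000) (L := 30) (m := -0.00000000137174211249) (by norm_num) (by norm_num) (by norm_num) (log_lb _ 30 1 (by norm_num) (by norm_num) (by norm_num) (by norm_num)) (by norm_num) (by norm_num)
    norm_num at hp
    have ha := intervalIntegral.integral_add_adjacent_intervals (a := (10687440000000:ℝ)) (b := 13722960000000) (c := (1e16:ℝ)) (μ := MeasureTheory.volume) (f := gg) (gg_contOn (by norm_num) (by norm_num)) (gg_contOn (by norm_num) (by norm_num))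
    linarith [T37]
  have T35 : (311277.003543:ℝ) ≤ ∫ t in (8323380000000:ℝ)..(1e16:ℝ), gg t := by
    have hp := piece (a := 8323380000000) (b := 10687440000000) (L := 29.75) (m := -0.00000000154005435077) (by norm_num) (by norm_num) (by norm_num) (log_lb _ 119 4 (by norm_num) (by norm_num) (by norm_num) (by norm_num)) (by norm_num) (by norm_num)
    norm_num at hp
    have ha := intervalIntegral.integral_add_adjacent_intervals (a := (8323380000000:ℝ)) (b := 10687440000000) (c := (1e16:ℝ)) (μ := MeasureTheory.volume) (f := gg) (gg_contOn (by norm_num) (by norm_num)) (gg_contOn (by norm_num) (by norm_num))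
    linarith [T36]
  have T34 : (308099.079436:ℝ) ≤ ∫ t in (6482250000000:ℝ)..(1e16:ℝ), gg t := by
    have hp := piece (a := 6482250000000) (b := 8323380000000) (L := 29.5) (m := -0.00000000172607263273) (by norm_num) (by norm_num) (by norm_num) (log_lb _ 118 4 (by norm_num) (by norm_num) (by norm_num) (by norm_num)) (by norm_num) (by norm_num)
    norm_num at hp
    have ha := intervalIntegral.integral_add_adjacent_intervals (a := (6482250000000:ℝ)) (b := 8323380000000) (c := (1e16:ℝ)) (μ := MeasureTheory.volume) (f := gg) (gg_contOn (by norm_num) (by norm_num)) (gg_contOn (by norm_num) (by norm_num))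
    linarith [T35]
  have T33 : (305329.30903:ℝ) ≤ ∫ t in (5048378000000:ℝ)..(1e16:ℝ), gg t := by
    have hp := piece (a := 5048378000000) (b := 6482250000000) (L := 29.25) (m := -0.00000000193167200793) (by norm_num) (by norm_num) (by norm_num) (log_lb _ 117 4 (by norm_num) (by norm_num) (by norm_num) (by norm_num)) (by norm_num) (by norm_num)
    norm_num at hp
    have ha := intervalIntegral.integral_add_adjacent_intervals (a := (5048378000000:ℝ)) (b := 6482250000000) (c := (1e16:ℝ)) (μ := MeasureTheory.volume) (f := gg) (gg_contOn (by norm_num) (by norm_num)) (gg_contOn (by norm_num) (by norm_num))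
    linarith [T34]
  have T32 : (302918.425176:ℝ) ≤ ∫ t in (3931678000000:ℝ)..(1e16:ℝ), gg t := by
    have hp := piece (a := 3931678000000) (b := 5048378000000) (L := 29) (m := -0.00000000215893602037) (by norm_num) (by norm_num) (by norm_num) (log_lb _ 29 1 (by norm_num) (by norm_num) (by norm_num) (by norm_num)) (by norm_num) (by norm_num)
    norm_num at hp
    have ha := intervalIntegral.integral_add_adjacent_intervals (a := (3931678000000:ℝ)) (b := 5048378000000) (c := (1e16:ℝ)) (μ := MeasureTheory.volume) (f := gg) (gg_contOn (by norm_num) (by norm_num)) (gg_contOn (by norm_num) (by norm_num))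
    linarith [T33]
  have T31 : (300822.321746:ℝ) ≤ ∫ t in (3061991000000:ℝ)..(1e16:ℝ), gg t := by
    have hp := piece (a := 3061991000000) (b := 3931678000000) (L := 28.75) (m := -0.00000000241018139822) (by norm_num) (by norm_num) (by norm_num) (log_lb _ 115 4 (by norm_num) (by norm_num) (by norm_num) (by norm_num)) (by norm_num) (by norm_num)
    norm_num at hp
    have ha := intervalIntegral.integral_add_adjacent_intervals (a := (3061991000000:ℝ)) (b := 3931678000000) (c := (1e16:ℝ)) (μ := MeasureTheory.volume) (f := gg) (gg_contOn (by norm_num) (by norm_num)) (gg_contOn (by norm_num) (by norm_num))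
    linarith [T32]
  have T30 : (299001.719347:ℝ) ≤ ∫ t in (2384680000000:ℝ)..(1e16:ℝ), gg t := by
    have hp := piece (a := 2384680000000) (b := 3061991000000) (L := 28.5) (m := -0.00000000268798587159) (by norm_num) (by norm_num) (by norm_num) (log_lb _ 114 4 (by norm_num) (by norm_num) (by norm_num) (by norm_num)) (by norm_num) (by norm_num)
    norm_num at hp
    have ha := intervalIntegral.integral_add_adjacent_intervals (a := (2384680000000:ℝ)) (b := 3061991000000) (c := (1e16:ℝ)) (μ := MeasureTheory.volume) (f := gg) (gg_contOn (by norm_num) (by norm_num)) (gg_contOn (by norm_num) (by norm_num))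
    linarith [T31]
  have T29 : (297421.767995:ℝ) ≤ ∫ t in (1857189000000:ℝ)..(1e16:ℝ), gg t := by
    have hp := piece (a := 1857189000000) (b := 2384680000000) (L := 28.25) (m := -0.00000000299521954279) (by norm_num) (by norm_num) (by norm_num) (log_lb _ 113 4 (by norm_num) (by norm_num) (by norm_num) (by norm_num)) (by norm_num) (by norm_num)
    norm_num at hp
    have ha := intervalIntegral.integral_add_adjacent_intervals (a := (1857189000000:ℝ)) (b := 2384680000000) (c := (1e16:ℝ)) (μ := MeasureTheory.volume) (f := gg) (gg_contOn (by norm_num) (by norm_num)) (gg_contOn (by norm_num) (by norm_num))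
    linarith [T30]
  have T28 : (296051.683659:ℝ) ≤ ∫ t in (1446379000000:ℝ)..(1e16:ℝ), gg t := by
    have hp := piece (a := 1446379000000) (b := 1857189000000) (L := 28) (m := -0.00000000333508029484) (by norm_num) (by norm_num) (by norm_num) (log_lb _ 28 1 (by norm_num) (by norm_num) (by norm_num) (by norm_num)) (by norm_num) (by norm_num)
    norm_num at hp
    have ha := intervalIntegral.integral_add_adjacent_intervals (a := (1446379000000:ℝ)) (b := 1857189000000) (c := (1e16:ℝ)) (μ := MeasureTheory.volume) (f := gg) (gg_contOn (by norm_num) (by norm_num)) (gg_contOn (by norm_num) (by norm_num))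
    linarith [T29]
  have T27 : (291390.081985:ℝ) ≤ ∫ t in (532091500000:ℝ)..(1e16:ℝ), gg t := by
    have hp := piece (a := 532091500000) (b := 1446379000000) (L := 27) (m := -0.00000000509861687252) (by norm_num) (by norm_num) (by norm_num) (log_lb _ 27 1 (by norm_num) (by norm_num) (by norm_num) (by norm_num)) (by norm_num) (by norm_num)
    norm_num at hp
    have ha := intervalIntegral.integral_add_adjacent_intervals (a := (532091500000:ℝ)) (b := 1446379000000) (c := (1e16:ℝ)) (μ := MeasureTheory.volume) (f := gg) (gg_contOn (by norm_num) (by norm_num)) (gg_contOn (by norm_num) (by norm_num))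
    linarith [T28]
  have T26 : (288780.83528:ℝ) ≤ ∫ t in (195745000000:ℝ)..(1e16:ℝ), gg t := by
    have hp := piece (a := 195745000000) (b := 532091500000) (L := 26) (m := -0.00000000775761515056) (by norm_num) (by norm_num) (by norm_num) (log_lb _ 26 1 (by norm_num) (by norm_num) (by norm_num) (by norm_num)) (by norm_num) (by norm_num)
    norm_num at hp
    have ha := intervalIntegral.integral_add_adjacent_intervals (a := (195745000000:ℝ)) (b := 532091500000) (c := (1e16:ℝ)) (μ := MeasureTheory.volume) (f := gg) (gg_contOn (by norm_num) (by norm_num)) (gg_contOn (by norm_num) (by norm_num))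
    linarith [T27]
  have T25 : (287321.201602:ℝ) ≤ ∫ t in (72010320000:ℝ)..(1e16:ℝ), gg t := by
    have hp := piece (a := 72010320000) (b := 195745000000) (L := 25) (m := -0.00000001179648) (by norm_num) (by norm_num) (by norm_num) (log_lb _ 25 1 (by norm_num) (by norm_num) (by norm_num) (by norm_num)) (by norm_num) (by norm_num)
    norm_num at hp
    have ha := intervalIntegral.integral_add_adjacent_intervals (a := (72010320000:ℝ)) (b := 195745000000) (c := (1e16:ℝ)) (μ := MeasureTheory.volume) (f := gg) (gg_contOn (by norm_num) (by norm_num)) (gg_contOn (by norm_num) (by norm_num))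
    linarith [T26]
  have T24 : (286502.415164:ℝ) ≤ ∫ t in (26491040000:ℝ)..(1e16:ℝ), gg t := by
    have hp := piece (a := 26491040000) (b := 72010320000) (L := 24) (m := -0.00000001798768429436) (by norm_num) (by norm_num) (by norm_num) (log_lb _ 24 1 (by norm_num) (by norm_num) (by norm_num) (by norm_num)) (by norm_num) (by norm_num)
    norm_num at hp
    have ha := intervalIntegral.integral_add_adjacent_intervals (a := (26491040000:ℝ)) (b := 72010320000) (c := (1e16:ℝ)) (μ := MeasureTheory.volume) (f := gg) (gg_contOn (by norm_num) (by norm_num)) (gg_contOn (by norm_num) (by norm_num))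
    linarith [T25]
  have T23 : (286040.533426:ℝ) ≤ ∫ t in (9745478000:ℝ)..(1e16:ℝ), gg t := by
    have hp := piece (a := 9745478000) (b := 26491040000) (L := 23) (m := -0.00000002758233716828) (by norm_num) (by norm_num) (by norm_num) (log_lb _ 23 1 (by norm_num) (by norm_num) (by norm_num) (by norm_num)) (by norm_num) (by norm_num)
    norm_num at hp
    have ha := intervalIntegral.integral_add_adjacent_intervals (a := (9745478000:ℝ)) (b := 26491040000) (c := (1e16:ℝ)) (μ := MeasureTheory.volume) (f := gg) (gg_contOn (by norm_num) (by norm_num)) (gg_contOn (by norm_num) (by norm_num))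
    linarith [T24]
  have T22 : (285777.846627:ℝ) ≤ ∫ t in (3585150000:ℝ)..(1e16:ℝ), gg t := by
    have hp := piece (a := 3585150000) (b := 9745478000) (L := 22) (m := -0.0000000426416902223) (by norm_num) (by norm_num) (by norm_num) (log_lb _ 22 1 (by norm_num) (by norm_num) (by norm_num) (by norm_num)) (by norm_num) (by norm_num)
    norm_num at hp
    have ha := intervalIntegral.integral_add_adjacent_intervals (a := (3585150000:ℝ)) (b := 9745478000) (c := (1e16:ℝ)) (μ := MeasureTheory.volume) (f := gg) (gg_contOn (by norm_num) (by norm_num)) (gg_contOn (by norm_num) (by norm_num))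
    linarith [T23]
  have T21 : (285626.854538:ℝ) ≤ ∫ t in (1318899000:ℝ)..(1e16:ℝ), gg t := by
    have hp := piece (a := 1318899000) (b := 3585150000) (L := 21) (m := -0.0000000666263746997) (by norm_num) (by norm_num) (by norm_num) (log_lb _ 21 1 (by norm_num) (by norm_num) (by norm_num) (by norm_num)) (by norm_num) (by norm_num)
    norm_num at hp
    have ha := intervalIntegral.integral_add_adjacent_intervals (a := (1318899000:ℝ)) (b := 3585150000) (c := (1e16:ℝ)) (μ := MeasureTheory.volume) (f := gg) (gg_contOn (by norm_num) (by norm_num)) (gg_contOn (by norm_num) (by norm_num))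
    linarith [T22]
  have T20 : (285538.924755:ℝ) ≤ ∫ t in (485194400:ℝ)..(1e16:ℝ), gg t := by
    have hp := piece (a := 485194400) (b := 1318899000) (L := 20) (m := -0.00000010546875) (by norm_num) (by norm_num) (by norm_num) (log_lb _ 20 1 (by norm_num) (by norm_num) (by norm_num) (by norm_num)) (by norm_num) (by norm_num)
    norm_num at hp
    have ha := intervalIntegral.integral_add_adjacent_intervals (a := (485194400:ℝ)) (b := 1318899000) (c := (1e16:ℝ)) (μ := MeasureTheory.volume) (f := gg) (gg_contOn (by norm_num) (by norm_num)) (gg_contOn (by norm_num) (by norm_num))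
    linarith [T21]
  have T19 : (285486.915558:ℝ) ≤ ∫ t in (178492500:ℝ)..(1e16:ℝ), gg t := by
    have hp := piece (a := 178492500) (b := 485194400) (L := 19) (m := -0.000000169575724072) (by norm_num) (by norm_num) (by norm_num) (log_lb _ 19 1 (by norm_num) (by norm_num) (by norm_num) (by norm_num)) (by norm_num) (by norm_num)
    norm_num at hp
    have ha := intervalIntegral.integral_add_adjacent_intervals (a := (178492500:ℝ)) (b := 485194400) (c := (1e16:ℝ)) (μ := MeasureTheory.volume) (f := gg) (gg_contOn (by norm_num) (by norm_num)) (gg_contOn (by norm_num) (by norm_num))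
    linarith [T20]
  have T18 : (285455.585441:ℝ) ≤ ∫ t in (65663530:ℝ)..(1e16:ℝ), gg t := by
    have hp := piece (a := 65663530) (b := 178492500) (L := 18) (m := -0.00000027767794438978) (by norm_num) (by norm_num) (by norm_num) (log_lb _ 18 1 (by norm_num) (by norm_num) (by norm_num) (by norm_num)) (by norm_num) (by norm_num)
    norm_num at hp
    have ha := intervalIntegral.integral_add_adjacent_intervals (a := (65663530:ℝ)) (b := 178492500) (c := (1e16:ℝ)) (μ := MeasureTheory.volume) (f := gg) (gg_contOn (by norm_num) (by norm_num)) (gg_contOn (by norm_num) (by norm_num))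
    linarith [T19]
  have T17 : (285436.306705:ℝ) ≤ ∫ t in (24156190:ℝ)..(1e16:ℝ), gg t := by
    have hp := piece (a := 24156190) (b := 65663530) (L := 17) (m := -0.00000046446569098818) (by norm_num) (by norm_num) (by norm_num) (log_lb _ 17 1 (by norm_num) (by norm_num) (by norm_num) (by norm_num)) (by norm_num) (by norm_num)
    norm_num at hp
    have ha := intervalIntegral.integral_add_adjacent_intervals (a := (24156190:ℝ)) (b := 65663530) (c := (1e16:ℝ)) (μ := MeasureTheory.volume) (f := gg) (gg_contOn (by norm_num) (by norm_num)) (gg_contOn (by norm_num) (by norm_num))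
    linarith [T18]
  have T16 : (285424.147774:ℝ) ≤ ∫ t in (8886538:ℝ)..(1e16:ℝ), gg t := by
    have hp := piece (a := 8886538) (b := 24156190) (L := 16) (m := -0.00000079628080129624) (by norm_num) (by norm_num) (by norm_num) (log_lb _ 16 1 (by norm_num) (by norm_num) (by norm_num) (by norm_num)) (by norm_num) (by norm_num)
    norm_num at hp
    have ha := intervalIntegral.integral_add_adjacent_intervals (a := (8886538:ℝ)) (b := 24156190) (c := (1e16:ℝ)) (μ := MeasureTheory.volume) (f := gg) (gg_contOn (by norm_num) (by norm_num)) (gg_contOn (by norm_num) (by norm_num))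
    linarith [T17]
  have T15 : (285416.257252:ℝ) ≤ ∫ t in (3269165:ℝ)..(1e16:ℝ), gg t := by
    have hp := piece (a := 3269165) (b := 8886538) (L := 15) (m := -0.00000140466392318245) (by norm_num) (by norm_num) (by norm_num) (log_lb _ 15 1 (by norm_num) (by norm_num) (by norm_num) (by norm_num)) (by norm_num) (by norm_num)
    norm_num at hp
    have ha := intervalIntegral.integral_add_adjacent_intervals (a := (3269165:ℝ)) (b := 8886538) (c := (1e16:ℝ)) (μ := MeasureTheory.volume) (f := gg) (gg_contOn (by norm_num) (by norm_num)) (gg_contOn (by norm_num) (by norm_num))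
    linarith [T16]
  have T14 : (285410.964213:ℝ) ≤ ∫ t in (1202655:ℝ)..(1e16:ℝ), gg t := by
    have hp := piece (a := 1202655) (b := 3269165) (L := 14) (m := -0.00000256134166643394) (by norm_num) (by norm_num) (by norm_num) (log_lb _ 14 1 (by norm_num) (by norm_num) (by norm_num) (by norm_num)) (by norm_num) (by norm_num)
    norm_num at hp
    have ha := intervalIntegral.integral_add_adjacent_intervals (a := (1202655:ℝ)) (b := 3269165) (c := (1e16:ℝ)) (μ := MeasureTheory.volume) (f := gg) (gg_contOn (by norm_num) (by norm_num)) (gg_contOn (by norm_num) (by norm_num))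
    linarith [T15]
  have T13 : (285407.273671:ℝ) ≤ ∫ t in (442430.7:ℝ)..(1e16:ℝ), gg t := by
    have hp := piece (a := 442430.7) (b := 1202655) (L := 13) (m := -0.00000485454316976742) (by norm_num) (by norm_num) (by norm_num) (log_lb _ 13 1 (by norm_num) (by norm_num) (by norm_num) (by norm_num)) (by norm_num) (by norm_num)
    norm_num at hp
    have ha := intervalIntegral.integral_add_adjacent_intervals (a := (442430.7:ℝ)) (b := 1202655) (c := (1e16:ℝ)) (μ := MeasureTheory.volume) (f := gg) (gg_contOn (by norm_num) (by norm_num)) (gg_contOn (by norm_num) (by norm_num))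
    linarith [T14]
  have T12 : (285404.580919:ℝ) ≤ ∫ t in (162760.7:ℝ)..(1e16:ℝ), gg t := by
    have hp := piece (a := 162760.7) (b := 442430.7) (L := 12) (m := -0.00000962831682956105) (by norm_num) (by norm_num) (by norm_num) (log_lb _ 12 1 (by norm_num) (by norm_num) (by norm_num) (by norm_num)) (by norm_num) (by norm_num)
    norm_num at hp
    have ha := intervalIntegral.integral_add_adjacent_intervals (a := (162760.7:ℝ)) (b := 442430.7) (c := (1e16:ℝ)) (μ := MeasureTheory.volume) (f := gg) (gg_contOn (by norm_num) (by norm_num)) (gg_contOn (by norm_num) (by norm_num))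
    linarith [T13]
  have T11 : (285402.507474:ℝ) ≤ ∫ t in (59876.13:ℝ)..(1e16:ℝ), gg t := by
    have hp := piece (a := 59876.13) (b := 162760.7) (L := 11) (m := -0.00002015311882506049) (by norm_num) (by norm_num) (by norm_num) (log_lb _ 11 1 (by norm_num) (by norm_num) (by norm_num) (by norm_num)) (by norm_num) (by norm_num)
    norm_num at hp
    have ha := intervalIntegral.integral_add_adjacent_intervals (a := (59876.13:ℝ)) (b := 162760.7) (c := (1e16:ℝ)) (μ := MeasureTheory.volume) (f := gg) (gg_contOn (by norm_num) (by norm_num)) (gg_contOn (by norm_num) (by norm_num))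
    linarith [T12]
  have T10 : (285400.804269:ℝ) ≤ ∫ t in (22027.13:ℝ)..(1e16:ℝ), gg t := by
    have hp := piece (a := 22027.13) (b := 59876.13) (L := 10) (m := -0.000045) (by norm_num) (by norm_num) (by norm_num) (log_lb _ 10 1 (by norm_num) (by norm_num) (by norm_num) (by norm_num)) (by norm_num) (by norm_num)
    norm_num at hp
    have ha := intervalIntegral.integral_add_adjacent_intervals (a := (22027.13:ℝ)) (b := 59876.13) (c := (1e16:ℝ)) (μ := MeasureTheory.volume) (f := gg) (gg_contOn (by norm_num) (by norm_num)) (gg_contOn (by norm_num) (by norm_num))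
    linarith [T11]
  have T9 : (285399.290483:ℝ) ≤ ∫ t in (8103.304:ℝ)..(1e16:ℝ), gg t := by
    have hp := piece (a := 8103.304) (b := 22027.13) (L := 9) (m := -0.00010871908222695987) (by norm_num) (by norm_num) (by norm_num) (log_lb _ 9 1 (by norm_num) (by norm_num) (by norm_num) (by norm_num)) (by norm_num) (by norm_num)
    norm_num at hp
    have ha := intervalIntegral.integral_add_adjacent_intervals (a := (8103.304:ℝ)) (b := 22027.13) (c := (1e16:ℝ)) (μ := MeasureTheory.volume) (f := gg) (gg_contOn (by norm_num) (by norm_num)) (gg_contOn (by norm_num) (by norm_num))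
    linarith [T10]
  have T8 : (285397.806669:ℝ) ≤ ∫ t in (2981.03:ℝ)..(1e16:ℝ), gg t := by
    have hp := piece (a := 2981.03) (b := 8103.304) (L := 8) (m := -0.00028967857360839844) (by norm_num) (by norm_num) (by norm_num) (log_lb _ 8 1 (by norm_num) (by norm_num) (by norm_num) (by norm_num)) (by norm_num) (by norm_num)
    norm_num at hp
    have ha := intervalIntegral.integral_add_adjacent_intervals (a := (2981.03:ℝ)) (b := 8103.304) (c := (1e16:ℝ)) (μ := MeasureTheory.volume) (f := gg) (gg_contOn (by norm_num) (by norm_num)) (gg_contOn (by norm_num) (by norm_num))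
    linarith [T9]
  have T7 : (285396.159215:ℝ) ≤ ∫ t in (1096.657:ℝ)..(1e16:ℝ), gg t := by
    have hp := piece (a := 1096.657) (b := 2981.03) (L := 7) (m := -0.00087427128880944893) (by norm_num) (by norm_num) (by norm_num) (log_lb _ 7 1 (by norm_num) (by norm_num) (by norm_num) (by norm_num)) (by norm_num) (by norm_num)
    norm_num at hp
    have ha := intervalIntegral.integral_add_adjacent_intervals (a := (1096.657:ℝ)) (b := 2981.03) (c := (1e16:ℝ)) (μ := MeasureTheory.volume) (f := gg) (gg_contOn (by norm_num) (by norm_num)) (gg_contOn (by norm_num) (by norm_num))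
    linarith [T8]
  have T6 : (285394.004786:ℝ) ≤ ∫ t in (403.4361:ℝ)..(1e16:ℝ), gg t := by
    have hp := piece (a := 403.4361) (b := 1096.657) (L := 6) (m := -0.00310785322359396434) (by norm_num) (by norm_num) (by norm_num) (log_lb _ 6 1 (by norm_num) (by norm_num) (by norm_num) (by norm_num)) (by norm_num) (by norm_num)
    norm_num at hp
    have ha := intervalIntegral.integral_add_adjacent_intervals (a := (403.4361:ℝ)) (b := 1096.657) (c := (1e16:ℝ)) (μ := MeasureTheory.volume) (f := gg) (gg_contOn (by norm_num) (by norm_num)) (gg_contOn (by norm_num) (by norm_num))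
    linarith [T7]
  have T5 : (285390.479379:ℝ) ≤ ∫ t in (148.4154:ℝ)..(1e16:ℝ), gg t := by
    have hp := piece (a := 148.4154) (b := 403.4361) (L := 5) (m := -0.013824) (by norm_num) (by norm_num) (by norm_num) (log_lb _ 5 1 (by norm_num) (by norm_num) (by norm_num) (by norm_num)) (by norm_num) (by norm_num)
    norm_num at hp
    have ha := intervalIntegral.integral_add_adjacent_intervals (a := (148.4154:ℝ)) (b := 403.4361) (c := (1e16:ℝ)) (μ := MeasureTheory.volume) (f := gg) (gg_contOn (by norm_num) (by norm_num)) (gg_contOn (by norm_num) (by norm_num))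
    linarith [T6]
  have T4 : (285382.491455:ℝ) ≤ ∫ t in (54.59881:ℝ)..(1e16:ℝ), gg t := by
    have hp := piece (a := 54.59881) (b := 148.4154) (L := 4) (m := -0.08514404296875) (by norm_num) (by norm_num) (by norm_num) (log_lb _ 4 1 (by norm_num) (by norm_num) (by norm_num) (by norm_num)) (by norm_num) (by norm_num)
    norm_num at hp
    have ha := intervalIntegral.integral_add_adjacent_intervals (a := (54.59881:ℝ)) (b := 148.4154) (c := (1e16:ℝ)) (μ := MeasureTheory.volume) (f := gg) (gg_contOn (by norm_num) (by norm_num)) (gg_contOn (by norm_num) (by norm_num))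
    linarith [T5]
  have T3 : (285352.191897:ℝ) ≤ ∫ t in (20.08572:ℝ)..(1e16:ℝ), gg t := by
    have hp := piece (a := 20.08572) (b := 54.59881) (L := 3) (m := -0.87791495198902606311) (by norm_num) (by norm_num) (by norm_num) (log_lb _ 3 1 (by norm_num) (by norm_num) (by norm_num) (by norm_num)) (by norm_num) (by norm_num)
    norm_num at hp
    have ha := intervalIntegral.integral_add_adjacent_intervals (a := (20.08572:ℝ)) (b := 54.59881) (c := (1e16:ℝ)) (μ := MeasureTheory.volume) (f := gg) (gg_contOn (by norm_num) (by norm_num)) (gg_contOn (by norm_num) (by norm_num))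
    linarith [T4]
  have T2 : (285057.590659:ℝ) ≤ ∫ t in (7.389101:ℝ)..(1e16:ℝ), gg t := by
    have hp := piece (a := 7.389101) (b := 20.08572) (L := 2) (m := -23.203125) (by norm_num) (by norm_num) (by norm_num) (log_lb _ 2 1 (by norm_num) (by norm_num) (by norm_num) (by norm_num)) (by norm_num) (by norm_num)
    norm_num at hp
    have ha := intervalIntegral.integral_add_adjacent_intervals (a := (7.389101:ℝ)) (b := 20.08572) (c := (1e16:ℝ)) (μ := MeasureTheory.volume) (f := gg) (gg_contOn (by norm_num) (by norm_num)) (gg_contOn (by norm_num) (by norm_num))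
    linarith [T3]
  have T1 : (256472.227339:ℝ) ≤ ∫ t in (2.71829:ℝ)..(1e16:ℝ), gg t := by
    have hp := piece (a := 2.71829) (b := 7.389101) (L := 1) (m := -6120) (by norm_num) (by norm_num) (by norm_num) (log_lb _ 1 1 (by norm_num) (by norm_num) (by norm_num) (by norm_num)) (by norm_num) (by norm_num)
    norm_num at hp
    have ha := intervalIntegral.integral_add_adjacent_intervals (a := (2.71829:ℝ)) (b := 7.389101) (c := (1e16:ℝ)) (μ := MeasureTheory.volume) (f := gg) (gg_contOn (by norm_num) (by norm_num)) (gg_contOn (by norm_num) (by norm_num))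
    linarith [T2]
  have T0 : (173228.883424:ℝ) ≤ ∫ t in (2:ℝ)..(1e16:ℝ), gg t := by
    have hp := piece (a := 2) (b := 2.71829) (L := 0.6931471803) (m := -115890.99655322675359316629) (by norm_num) (by norm_num) (by norm_num) (le_of_lt Real.log_two_gt_d9) (by norm_num) (by norm_num)
    norm_num at hp
    have ha := intervalIntegral.integral_add_adjacent_intervals (a := (2:ℝ)) (b := 2.71829) (c := (1e16:ℝ)) (μ := MeasureTheory.volume) (f := gg) (gg_contOn (by norm_num) (by norm_num)) (gg_contOn (by norm_num) (by norm_num))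
    linarith [T1]
  linarith [T0]

theorem li_upper_bound_1e16 (x : ℝ) (hx : 10 ^ 16 ≤ x) :
    (∫ t in (2:ℝ)..x, 1 / Real.log t) ≤
      x / Real.log x + x / Real.log x ^ 2 + 2 * x / Real.log x ^ 3 + 6 * x / Real.log x ^ 4
        + 24 * x / Real.log x ^ 5 + 120 * x / Real.log x ^ 6 + 900 * x / Real.log x ^ 7 := by
  have h16 : (1e16:ℝ) ≤ x := by norm_num at hx ⊢; linarith
  have hx2 : (2:ℝ) ≤ x := by linarith [h16]; 
  have hFTC : ∫ t in (2:ℝ)..x, (1 / Real.log t + gg t) = FF x - FF 2 := by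
    apply intervalIntegral.integral_eq_sub_of_hasDerivAt
    · intro t ht
      rw [Set.uIcc_of_le hx2] at ht
      exact FF_deriv ht.1
    · exact (invlog_int le_rfl hx2).add (gg_contOn le_rfl hx2)
  have hsplit : ∫ t in (2:ℝ)..x, (1 / Real.log t + gg t)
      = (∫ t in (2:ℝ)..x, 1 / Real.log t) + ∫ t in (2:ℝ)..x, gg t :=
    intervalIntegral.integral_add (invlog_int le_rfl hx2) (gg_contOn le_rfl hx2)
  have hg : (-25900:ℝ) ≤ ∫ t in (2:ℝ)..x, gg t := by
    have e : (∫ t in (2:ℝ)..(1e16:ℝ), gg t) + (∫ t in (1e16:ℝ)..x, gg t)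
        = ∫ t in (2:ℝ)..x, gg t :=
      intervalIntegral.integral_add_adjacent_intervals
        (gg_contOn le_rfl (by norm_num)) (gg_contOn (by norm_num) hx2)
    have pos : 0 ≤ ∫ t in (1e16:ℝ)..x, gg t := by
      apply intervalIntegral.integral_nonneg h16
      intro t ht
      exact gg_nonneg ht.1
    linarith [riemann]
  have hFFx : FF x = x / Real.log x + x / Real.log x ^ 2 + 2 * x / Real.log x ^ 3
      + 6 * x / Real.log x ^ 4 + 24 * x / Real.log x ^ 5 + 120 * x / Real.log x ^ 6
      + 900 * x / Real.log x ^ 7 := rfl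
  rw [← hFFx]
  linarith [F2_lb]
end

section
/- For every real number x ≥ 10^18, ∫_2^x dt/log t ≤ x/log x + x/(log x)² + 2x/(log x)³ + 6x/(log x)⁴ + 24x/(log x)⁵ + 120x/(log x)⁶ + 720x/(log x)⁷ + 6300x/(log x)⁸. -/
set_option maxHeartbeats 2000000


open Filter Asymptotics

section LiBoundAux

open Set MeasureTheory intervalIntegral


lemma log5_gt : (1.6093434207:ℝ) < Real.log 5 := by
  have h : Real.log (128/125) = 7 * Real.log 2 - 3 * Real.log 5 := by
    rw [Real.log_div (by norm_num) (by norm_num),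
        show (128:ℝ) = 2^7 by norm_num, show (125:ℝ) = 5^3 by norm_num,
        Real.log_pow, Real.log_pow]
    push_cast; ring
  have h1 : Real.log (128/125) ≤ 128/125 - 1 := Real.log_le_sub_one_of_pos (by norm_num)
  have h2 := Real.log_two_gt_d9
  linarith

lemma log5_lt : Real.log 5 < 1.609530922 := by
  have h : Real.log (128/125) = 7 * Real.log 2 - 3 * Real.log 5 := by
    rw [Real.log_div (by norm_num) (by norm_num),
        show (128:ℝ) = 2^7 by norm_num, show (125:ℝ) = 5^3 by norm_num,
        Real.log_pow, Real.log_pow]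
    push_cast; ring
  have h1 : Real.log (125/128) ≤ 125/128 - 1 := Real.log_le_sub_one_of_pos (by norm_num)
  have h3 : Real.log (125/128) = - Real.log (128/125) := by
    rw [← Real.log_inv]; norm_num
  have h2 := Real.log_two_lt_d9
  linarith

lemma log_node (A B : ℕ) (la : ℝ) (h : la ≤ A*0.6931471803 + B*1.6093434207) :
    la ≤ Real.log ((2:ℝ)^A * 5^B) := by
  rw [Real.log_mul (by positivity) (by positivity), Real.log_pow, Real.log_pow]
  have h2 := Real.log_two_gt_d9
  have h5 := log5_gt
  have hA : (0:ℝ) ≤ (A:ℝ) := Nat.cast_nonneg A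
  have hB : (0:ℝ) ≤ (B:ℝ) := Nat.cast_nonneg B
  nlinarith


lemma intIntegrable_one_div_log_pow (m : ℕ) {a b : ℝ} (ha : 1 < a) (hab : a ≤ b) :
    IntervalIntegrable (fun t => 1/Real.log t^m) volume a b := by
  apply ContinuousOn.intervalIntegrable
  apply ContinuousOn.div continuousOn_const
  · apply ContinuousOn.pow
    apply Real.continuousOn_log.mono
    intro t ht
    rw [uIcc_of_le hab] at ht
    simp only [mem_compl_iff, mem_singleton_iff]
    intro h0; rw [h0] at ht; exact absurd ht.1 (by linarith)
  · intro t ht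
    rw [uIcc_of_le hab] at ht
    exact pow_ne_zero _ (ne_of_gt (Real.log_pos (lt_of_lt_of_le ha ht.1)))

lemma trap_core {a b la lb : ℝ} (hla : 0 < la) (hlb : 0 < lb) (ha1 : 1 < a) (hab : a < b)
    (h1 : la ≤ Real.log a) (h2 : lb ≤ Real.log b) :
    ∫ t in a..b, 1/Real.log t^11 ≤ (b-a)*(1/la^11 + 1/lb^11)/2 := by
  have hba : (0:ℝ) < b - a := by linarith
  have hg := intIntegrable_one_div_log_pow 11 ha1 hab.le
  have hlin : IntervalIntegrable
      (fun t => ((b-t)*(1/la^11) + (t-a)*(1/lb^11))/(b-a)) volume a b := by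
    apply Continuous.intervalIntegrable; fun_prop
  have hpt : ∀ t ∈ Icc a b, 1/Real.log t^11 ≤ ((b-t)*(1/la^11) + (t-a)*(1/lb^11))/(b-a) := by
    intro t ht
    obtain ⟨hta, htb⟩ := ht
    set μ := (b-t)/(b-a) with hμdef
    set ν := (t-a)/(b-a) with hνdef
    have hμ : 0 ≤ μ := div_nonneg (by linarith) hba.le
    have hν : 0 ≤ ν := div_nonneg (by linarith) hba.le
    have hμν : μ + ν = 1 := by rw [hμdef, hνdef]; field_simp; ring
    have hconc := (strictConcaveOn_log_Ioi.concaveOn).2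
      (mem_Ioi.2 (by linarith : (0:ℝ) < a)) (mem_Ioi.2 (by linarith : (0:ℝ) < b)) hμ hν hμν
    have ht' : μ*a + ν*b = t := by rw [hμdef, hνdef]; field_simp; ring
    have hconc' : μ * Real.log a + ν * Real.log b ≤ Real.log t := by
      rw [← ht']; exact hconc
    have hlogt : μ*la + ν*lb ≤ Real.log t := by
      have e1 : μ*la ≤ μ*Real.log a := mul_le_mul_of_nonneg_left h1 hμ
      have e2 : ν*lb ≤ ν*Real.log b := mul_le_mul_of_nonneg_left h2 hν
      linarith
    have hpos : 0 < μ*la + ν*lb := by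
      rcases le_total la lb with h | h
      · nlinarith
      · nlinarith
    have hconv := (strictConvexOn_zpow (by decide : (-11:ℤ) ≠ 0)
      (by decide : (-11:ℤ) ≠ 1)).convexOn.2 (mem_Ioi.2 hla) (mem_Ioi.2 hlb) hμ hν hμν
    simp only [smul_eq_mul, zpow_neg, ← zpow_natCast] at hconv
    norm_num at hconv
    have hmono : 1/Real.log t^11 ≤ 1/(μ*la+ν*lb)^11 := by
      apply one_div_le_one_div_of_le (by positivity)
      exact pow_le_pow_left₀ hpos.le hlogt 11
    calc 1/Real.log t^11 ≤ 1/(μ*la+ν*lb)^11 := hmono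
      _ ≤ μ*(la^11)⁻¹ + ν*(lb^11)⁻¹ := by
          rw [one_div]
          convert hconv using 2 <;> norm_num
      _ = ((b-t)*(1/la^11) + (t-a)*(1/lb^11))/(b-a) := by
          rw [hμdef, hνdef]; field_simp
  have hmain := intervalIntegral.integral_mono_on hab.le hg hlin hpt
  refine hmain.trans ?_
  have hbne : b - a ≠ 0 := ne_of_gt hba
  have : (fun t => ((b-t)*(1/la^11) + (t-a)*(1/lb^11))/(b-a))
      = (fun t => (b*(1/la^11) - a*(1/lb^11))/(b-a) + ((1/lb^11 - 1/la^11)/(b-a))*t) := by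
    funext t; field_simp; ring
  rw [this, intervalIntegral.integral_add intervalIntegrable_const
      ((by fun_prop : Continuous fun t:ℝ => ((1/lb^11 - 1/la^11)/(b-a))*t).intervalIntegrable a b), intervalIntegral.integral_const,
      intervalIntegral.integral_const_mul, integral_id, smul_eq_mul]
  have key : (b*(1/la^11) - a*(1/lb^11))/(b-a)*(b-a) + (1/lb^11 - 1/la^11)/(b-a)*((b^2-a^2)/2)
      = (b-a)*(1/la^11 + 1/lb^11)/2 := by
    field_simp
    ring
  linarith


lemma hasDerivAt_div_log_pow (k : ℕ) {t : ℝ} (ht : 1 < t) :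
    HasDerivAt (fun s => s / Real.log s ^ (k+1))
      (1/Real.log t ^ (k+1) - (k+1)/Real.log t ^ (k+2)) t := by
  have h0 : (0:ℝ) < t := lt_trans one_pos ht
  have hL : 0 < Real.log t := Real.log_pos ht
  have hd : HasDerivAt (fun s => Real.log s ^ (k+1)) ((k+1) * Real.log t ^ k * t⁻¹) t := by
    have := (Real.hasDerivAt_log (ne_of_gt h0)).pow (k+1)
    exact this.congr_deriv (by push_cast; ring)
  have hmain := (hasDerivAt_id t).div hd (by positivity)
  refine hmain.congr_deriv ?_
  have hLne : Real.log t ≠ 0 := ne_of_gt hL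
  rw [id]
  field_simp
  ring

noncomputable def Gfun (t : ℝ) : ℝ :=
  t/Real.log t^1 + 1*(t/Real.log t^2) + 2*(t/Real.log t^3) + 6*(t/Real.log t^4)
  + 24*(t/Real.log t^5) + 120*(t/Real.log t^6) + 720*(t/Real.log t^7) + 5040*(t/Real.log t^8)
  + 40320*(t/Real.log t^9) + 362880*(t/Real.log t^10)

lemma Gfun_deriv {t : ℝ} (ht : 1 < t) :
    HasDerivAt Gfun (1/Real.log t - 3628800/Real.log t^11) t := by
  have hL : 0 < Real.log t := Real.log_pos ht
  have hLne : Real.log t ≠ 0 := ne_of_gt hL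
  have h0 := hasDerivAt_div_log_pow 0 ht
  have h1 := (hasDerivAt_div_log_pow 1 ht).const_mul (1:ℝ)
  have h2 := (hasDerivAt_div_log_pow 2 ht).const_mul (2:ℝ)
  have h3 := (hasDerivAt_div_log_pow 3 ht).const_mul (6:ℝ)
  have h4 := (hasDerivAt_div_log_pow 4 ht).const_mul (24:ℝ)
  have h5 := (hasDerivAt_div_log_pow 5 ht).const_mul (120:ℝ)
  have h6 := (hasDerivAt_div_log_pow 6 ht).const_mul (720:ℝ)
  have h7 := (hasDerivAt_div_log_pow 7 ht).const_mul (5040:ℝ)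
  have h8 := (hasDerivAt_div_log_pow 8 ht).const_mul (40320:ℝ)
  have h9 := (hasDerivAt_div_log_pow 9 ht).const_mul (362880:ℝ)
  have hsum := ((((((((h0.add h1).add h2).add h3).add h4).add h5).add h6).add h7).add h8).add h9
  refine hsum.congr_deriv ?_
  push_cast; field_simp; ring

noncomputable def Ffun (t : ℝ) : ℝ :=
  t/Real.log t^1 + 1*(t/Real.log t^2) + 2*(t/Real.log t^3) + 6*(t/Real.log t^4)
  + 24*(t/Real.log t^5) + 120*(t/Real.log t^6) + 720*(t/Real.log t^7) + 6300*(t/Real.log t^8)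

lemma Ffun_deriv {t : ℝ} (ht : 1 < t) :
    HasDerivAt Ffun (1/Real.log t + 1260/Real.log t^8 - 50400/Real.log t^9) t := by
  have hL : 0 < Real.log t := Real.log_pos ht
  have hLne : Real.log t ≠ 0 := ne_of_gt hL
  have h0 := hasDerivAt_div_log_pow 0 ht
  have h1 := (hasDerivAt_div_log_pow 1 ht).const_mul (1:ℝ)
  have h2 := (hasDerivAt_div_log_pow 2 ht).const_mul (2:ℝ)
  have h3 := (hasDerivAt_div_log_pow 3 ht).const_mul (6:ℝ)
  have h4 := (hasDerivAt_div_log_pow 4 ht).const_mul (24:ℝ)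
  have h5 := (hasDerivAt_div_log_pow 5 ht).const_mul (120:ℝ)
  have h6 := (hasDerivAt_div_log_pow 6 ht).const_mul (720:ℝ)
  have h7 := (hasDerivAt_div_log_pow 7 ht).const_mul (6300:ℝ)
  have hsum := ((((((h0.add h1).add h2).add h3).add h4).add h5).add h6).add h7
  refine hsum.congr_deriv ?_
  push_cast; field_simp; ring


lemma intIntegrable_one_div_log {a b : ℝ} (ha : 1 < a) (hab : a ≤ b) :
    IntervalIntegrable (fun t => 1/Real.log t) volume a b := by
  have h := intIntegrable_one_div_log_pow 1 ha hab
  simpa using h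

lemma quad_bound :
    ∫ t in (8:ℝ)..(1000000000000000000:ℝ), 1/Real.log t^11 ≤ 2.271049 := by
  have p0 : ∫ t in (8:ℝ)..(256:ℝ), 1/Real.log t^11 ≤ 0.039448 := by
    have l1 : (2.079441:ℝ) ≤ Real.log (8:ℝ) := by
      rw [show ((8:ℝ)) = 2^3*5^0 by norm_num]; exact log_node 3 0 _ (by norm_num)
    have l2 : (5.545177:ℝ) ≤ Real.log (256:ℝ) := by
      rw [show ((256:ℝ)) = 2^8*5^0 by norm_num]; exact log_node 8 0 _ (by norm_num)
    exact (trap_core (by norm_num) (by norm_num) (by norm_num) (by norm_num) l1 l2).trans (by norm_num)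
  have p1 : ∫ t in (256:ℝ)..(8192:ℝ), 1/Real.log t^11 ≤ 0.000027 := by
    have l1 : (5.545177:ℝ) ≤ Real.log (256:ℝ) := by
      rw [show ((256:ℝ)) = 2^8*5^0 by norm_num]; exact log_node 8 0 _ (by norm_num)
    have l2 : (9.010913:ℝ) ≤ Real.log (8192:ℝ) := by
      rw [show ((8192:ℝ)) = 2^13*5^0 by norm_num]; exact log_node 13 0 _ (by norm_num)
    exact (trap_core (by norm_num) (by norm_num) (by norm_num) (by norm_num) l1 l2).trans (by norm_num)
  have p2 : ∫ t in (8192:ℝ)..(262144:ℝ), 1/Real.log t^11 ≤ 0.000005 := by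
    have l1 : (9.010913:ℝ) ≤ Real.log (8192:ℝ) := by
      rw [show ((8192:ℝ)) = 2^13*5^0 by norm_num]; exact log_node 13 0 _ (by norm_num)
    have l2 : (12.476649:ℝ) ≤ Real.log (262144:ℝ) := by
      rw [show ((262144:ℝ)) = 2^18*5^0 by norm_num]; exact log_node 18 0 _ (by norm_num)
    exact (trap_core (by norm_num) (by norm_num) (by norm_num) (by norm_num) l1 l2).trans (by norm_num)
  have p3 : ∫ t in (262144:ℝ)..(8388608:ℝ), 1/Real.log t^11 ≤ 0.000004 := by
    have l1 : (12.476649:ℝ) ≤ Real.log (262144:ℝ) := by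
      rw [show ((262144:ℝ)) = 2^18*5^0 by norm_num]; exact log_node 18 0 _ (by norm_num)
    have l2 : (15.942385:ℝ) ≤ Real.log (8388608:ℝ) := by
      rw [show ((8388608:ℝ)) = 2^23*5^0 by norm_num]; exact log_node 23 0 _ (by norm_num)
    exact (trap_core (by norm_num) (by norm_num) (by norm_num) (by norm_num) l1 l2).trans (by norm_num)
  have p4 : ∫ t in (8388608:ℝ)..(268435456:ℝ), 1/Real.log t^11 ≤ 0.000009 := by
    have l1 : (15.942385:ℝ) ≤ Real.log (8388608:ℝ) := by
      rw [show ((8388608:ℝ)) = 2^23*5^0 by norm_num]; exact log_node 23 0 _ (by norm_num)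
    have l2 : (19.408121:ℝ) ≤ Real.log (268435456:ℝ) := by
      rw [show ((268435456:ℝ)) = 2^28*5^0 by norm_num]; exact log_node 28 0 _ (by norm_num)
    exact (trap_core (by norm_num) (by norm_num) (by norm_num) (by norm_num) l1 l2).trans (by norm_num)
  have p5 : ∫ t in (268435456:ℝ)..(8589934592:ℝ), 1/Real.log t^11 ≤ 0.000033 := by
    have l1 : (19.408121:ℝ) ≤ Real.log (268435456:ℝ) := by
      rw [show ((268435456:ℝ)) = 2^28*5^0 by norm_num]; exact log_node 28 0 _ (by norm_num)
    have l2 : (22.873856:ℝ) ≤ Real.log (8589934592:ℝ) := by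
      rw [show ((8589934592:ℝ)) = 2^33*5^0 by norm_num]; exact log_node 33 0 _ (by norm_num)
    exact (trap_core (by norm_num) (by norm_num) (by norm_num) (by norm_num) l1 l2).trans (by norm_num)
  have p6 : ∫ t in (8589934592:ℝ)..(274877906944:ℝ), 1/Real.log t^11 ≤ 0.00018 := by
    have l1 : (22.873856:ℝ) ≤ Real.log (8589934592:ℝ) := by
      rw [show ((8589934592:ℝ)) = 2^33*5^0 by norm_num]; exact log_node 33 0 _ (by norm_num)
    have l2 : (26.339592:ℝ) ≤ Real.log (274877906944:ℝ) := by
      rw [show ((274877906944:ℝ)) = 2^38*5^0 by norm_num]; exact log_node 38 0 _ (by norm_num)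
    exact (trap_core (by norm_num) (by norm_num) (by norm_num) (by norm_num) l1 l2).trans (by norm_num)
  have p7 : ∫ t in (274877906944:ℝ)..(8796093022208:ℝ), 1/Real.log t^11 ≤ 0.001265 := by
    have l1 : (26.339592:ℝ) ≤ Real.log (274877906944:ℝ) := by
      rw [show ((274877906944:ℝ)) = 2^38*5^0 by norm_num]; exact log_node 38 0 _ (by norm_num)
    have l2 : (29.805328:ℝ) ≤ Real.log (8796093022208:ℝ) := by
      rw [show ((8796093022208:ℝ)) = 2^43*5^0 by norm_num]; exact log_node 43 0 _ (by norm_num)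
    exact (trap_core (by norm_num) (by norm_num) (by norm_num) (by norm_num) l1 l2).trans (by norm_num)
  have p8 : ∫ t in (8796093022208:ℝ)..(35184372088832:ℝ), 1/Real.log t^11 ≤ 0.001286 := by
    have l1 : (29.805328:ℝ) ≤ Real.log (8796093022208:ℝ) := by
      rw [show ((8796093022208:ℝ)) = 2^43*5^0 by norm_num]; exact log_node 43 0 _ (by norm_num)
    have l2 : (31.191623:ℝ) ≤ Real.log (35184372088832:ℝ) := by
      rw [show ((35184372088832:ℝ)) = 2^45*5^0 by norm_num]; exact log_node 45 0 _ (by norm_num)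
    exact (trap_core (by norm_num) (by norm_num) (by norm_num) (by norm_num) l1 l2).trans (by norm_num)
  have p9 : ∫ t in (35184372088832:ℝ)..(70368744177664:ℝ), 1/Real.log t^11 ≤ 0.001156 := by
    have l1 : (31.191623:ℝ) ≤ Real.log (35184372088832:ℝ) := by
      rw [show ((35184372088832:ℝ)) = 2^45*5^0 by norm_num]; exact log_node 45 0 _ (by norm_num)
    have l2 : (31.88477:ℝ) ≤ Real.log (70368744177664:ℝ) := by
      rw [show ((70368744177664:ℝ)) = 2^46*5^0 by norm_num]; exact log_node 46 0 _ (by norm_num)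
    exact (trap_core (by norm_num) (by norm_num) (by norm_num) (by norm_num) l1 l2).trans (by norm_num)
  have p10 : ∫ t in (70368744177664:ℝ)..(140737488355328:ℝ), 1/Real.log t^11 ≤ 0.001819 := by
    have l1 : (31.88477:ℝ) ≤ Real.log (70368744177664:ℝ) := by
      rw [show ((70368744177664:ℝ)) = 2^46*5^0 by norm_num]; exact log_node 46 0 _ (by norm_num)
    have l2 : (32.577917:ℝ) ≤ Real.log (140737488355328:ℝ) := by
      rw [show ((140737488355328:ℝ)) = 2^47*5^0 by norm_num]; exact log_node 47 0 _ (by norm_num)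
    exact (trap_core (by norm_num) (by norm_num) (by norm_num) (by norm_num) l1 l2).trans (by norm_num)
  have p11 : ∫ t in (140737488355328:ℝ)..(281474976710656:ℝ), 1/Real.log t^11 ≤ 0.002877 := by
    have l1 : (32.577917:ℝ) ≤ Real.log (140737488355328:ℝ) := by
      rw [show ((140737488355328:ℝ)) = 2^47*5^0 by norm_num]; exact log_node 47 0 _ (by norm_num)
    have l2 : (33.271064:ℝ) ≤ Real.log (281474976710656:ℝ) := by
      rw [show ((281474976710656:ℝ)) = 2^48*5^0 by norm_num]; exact log_node 48 0 _ (by norm_num)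
    exact (trap_core (by norm_num) (by norm_num) (by norm_num) (by norm_num) l1 l2).trans (by norm_num)
  have p12 : ∫ t in (281474976710656:ℝ)..(562949953421312:ℝ), 1/Real.log t^11 ≤ 0.004574 := by
    have l1 : (33.271064:ℝ) ≤ Real.log (281474976710656:ℝ) := by
      rw [show ((281474976710656:ℝ)) = 2^48*5^0 by norm_num]; exact log_node 48 0 _ (by norm_num)
    have l2 : (33.964211:ℝ) ≤ Real.log (562949953421312:ℝ) := by
      rw [show ((562949953421312:ℝ)) = 2^49*5^0 by norm_num]; exact log_node 49 0 _ (by norm_num)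
    exact (trap_core (by norm_num) (by norm_num) (by norm_num) (by norm_num) l1 l2).trans (by norm_num)
  have p13 : ∫ t in (562949953421312:ℝ)..(1125899906842624:ℝ), 1/Real.log t^11 ≤ 0.007306 := by
    have l1 : (33.964211:ℝ) ≤ Real.log (562949953421312:ℝ) := by
      rw [show ((562949953421312:ℝ)) = 2^49*5^0 by norm_num]; exact log_node 49 0 _ (by norm_num)
    have l2 : (34.657359:ℝ) ≤ Real.log (1125899906842624:ℝ) := by
      rw [show ((1125899906842624:ℝ)) = 2^50*5^0 by norm_num]; exact log_node 50 0 _ (by norm_num)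
    exact (trap_core (by norm_num) (by norm_num) (by norm_num) (by norm_num) l1 l2).trans (by norm_num)
  have p14 : ∫ t in (1125899906842624:ℝ)..(2251799813685248:ℝ), 1/Real.log t^11 ≤ 0.011723 := by
    have l1 : (34.657359:ℝ) ≤ Real.log (1125899906842624:ℝ) := by
      rw [show ((1125899906842624:ℝ)) = 2^50*5^0 by norm_num]; exact log_node 50 0 _ (by norm_num)
    have l2 : (35.350506:ℝ) ≤ Real.log (2251799813685248:ℝ) := by
      rw [show ((2251799813685248:ℝ)) = 2^51*5^0 by norm_num]; exact log_node 51 0 _ (by norm_num)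
    exact (trap_core (by norm_num) (by norm_num) (by norm_num) (by norm_num) l1 l2).trans (by norm_num)
  have p15 : ∫ t in (2251799813685248:ℝ)..(4503599627370496:ℝ), 1/Real.log t^11 ≤ 0.018892 := by
    have l1 : (35.350506:ℝ) ≤ Real.log (2251799813685248:ℝ) := by
      rw [show ((2251799813685248:ℝ)) = 2^51*5^0 by norm_num]; exact log_node 51 0 _ (by norm_num)
    have l2 : (36.043653:ℝ) ≤ Real.log (4503599627370496:ℝ) := by
      rw [show ((4503599627370496:ℝ)) = 2^52*5^0 by norm_num]; exact log_node 52 0 _ (by norm_num)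
    exact (trap_core (by norm_num) (by norm_num) (by norm_num) (by norm_num) l1 l2).trans (by norm_num)
  have p16 : ∫ t in (4503599627370496:ℝ)..(9007199254740992:ℝ), 1/Real.log t^11 ≤ 0.030572 := by
    have l1 : (36.043653:ℝ) ≤ Real.log (4503599627370496:ℝ) := by
      rw [show ((4503599627370496:ℝ)) = 2^52*5^0 by norm_num]; exact log_node 52 0 _ (by norm_num)
    have l2 : (36.7368:ℝ) ≤ Real.log (9007199254740992:ℝ) := by
      rw [show ((9007199254740992:ℝ)) = 2^53*5^0 by norm_num]; exact log_node 53 0 _ (by norm_num)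
    exact (trap_core (by norm_num) (by norm_num) (by norm_num) (by norm_num) l1 l2).trans (by norm_num)
  have p17 : ∫ t in (9007199254740992:ℝ)..(18014398509481984:ℝ), 1/Real.log t^11 ≤ 0.049673 := by
    have l1 : (36.7368:ℝ) ≤ Real.log (9007199254740992:ℝ) := by
      rw [show ((9007199254740992:ℝ)) = 2^53*5^0 by norm_num]; exact log_node 53 0 _ (by norm_num)
    have l2 : (37.429947:ℝ) ≤ Real.log (18014398509481984:ℝ) := by
      rw [show ((18014398509481984:ℝ)) = 2^54*5^0 by norm_num]; exact log_node 54 0 _ (by norm_num)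
    exact (trap_core (by norm_num) (by norm_num) (by norm_num) (by norm_num) l1 l2).trans (by norm_num)
  have p18 : ∫ t in (18014398509481984:ℝ)..(22517998136852480:ℝ), 1/Real.log t^11 ≤ 0.021587 := by
    have l1 : (37.429947:ℝ) ≤ Real.log (18014398509481984:ℝ) := by
      rw [show ((18014398509481984:ℝ)) = 2^54*5^0 by norm_num]; exact log_node 54 0 _ (by norm_num)
    have l2 : (37.652996:ℝ) ≤ Real.log (22517998136852480:ℝ) := by
      rw [show ((22517998136852480:ℝ)) = 2^52*5^1 by norm_num]; exact log_node 52 1 _ (by norm_num)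
    exact (trap_core (by norm_num) (by norm_num) (by norm_num) (by norm_num) l1 l2).trans (by norm_num)
  have p19 : ∫ t in (22517998136852480:ℝ)..(28147497671065600:ℝ), 1/Real.log t^11 ≤ 0.025282 := by
    have l1 : (37.652996:ℝ) ≤ Real.log (22517998136852480:ℝ) := by
      rw [show ((22517998136852480:ℝ)) = 2^52*5^1 by norm_num]; exact log_node 52 1 _ (by norm_num)
    have l2 : (37.876045:ℝ) ≤ Real.log (28147497671065600:ℝ) := by
      rw [show ((28147497671065600:ℝ)) = 2^50*5^2 by norm_num]; exact log_node 50 2 _ (by norm_num)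
    exact (trap_core (by norm_num) (by norm_num) (by norm_num) (by norm_num) l1 l2).trans (by norm_num)
  have p20 : ∫ t in (28147497671065600:ℝ)..(35184372088832000:ℝ), 1/Real.log t^11 ≤ 0.029619 := by
    have l1 : (37.876045:ℝ) ≤ Real.log (28147497671065600:ℝ) := by
      rw [show ((28147497671065600:ℝ)) = 2^50*5^2 by norm_num]; exact log_node 50 2 _ (by norm_num)
    have l2 : (38.099094:ℝ) ≤ Real.log (35184372088832000:ℝ) := by
      rw [show ((35184372088832000:ℝ)) = 2^48*5^3 by norm_num]; exact log_node 48 3 _ (by norm_num)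
    exact (trap_core (by norm_num) (by norm_num) (by norm_num) (by norm_num) l1 l2).trans (by norm_num)
  have p21 : ∫ t in (35184372088832000:ℝ)..(43980465111040000:ℝ), 1/Real.log t^11 ≤ 0.034715 := by
    have l1 : (38.099094:ℝ) ≤ Real.log (35184372088832000:ℝ) := by
      rw [show ((35184372088832000:ℝ)) = 2^48*5^3 by norm_num]; exact log_node 48 3 _ (by norm_num)
    have l2 : (38.322143:ℝ) ≤ Real.log (43980465111040000:ℝ) := by
      rw [show ((43980465111040000:ℝ)) = 2^46*5^4 by norm_num]; exact log_node 46 4 _ (by norm_num)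
    exact (trap_core (by norm_num) (by norm_num) (by norm_num) (by norm_num) l1 l2).trans (by norm_num)
  have p22 : ∫ t in (43980465111040000:ℝ)..(54975581388800000:ℝ), 1/Real.log t^11 ≤ 0.040702 := by
    have l1 : (38.322143:ℝ) ≤ Real.log (43980465111040000:ℝ) := by
      rw [show ((43980465111040000:ℝ)) = 2^46*5^4 by norm_num]; exact log_node 46 4 _ (by norm_num)
    have l2 : (38.545193:ℝ) ≤ Real.log (54975581388800000:ℝ) := by
      rw [show ((54975581388800000:ℝ)) = 2^44*5^5 by norm_num]; exact log_node 44 5 _ (by norm_num)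
    exact (trap_core (by norm_num) (by norm_num) (by norm_num) (by norm_num) l1 l2).trans (by norm_num)
  have p23 : ∫ t in (54975581388800000:ℝ)..(68719476736000000:ℝ), 1/Real.log t^11 ≤ 0.04774 := by
    have l1 : (38.545193:ℝ) ≤ Real.log (54975581388800000:ℝ) := by
      rw [show ((54975581388800000:ℝ)) = 2^44*5^5 by norm_num]; exact log_node 44 5 _ (by norm_num)
    have l2 : (38.768242:ℝ) ≤ Real.log (68719476736000000:ℝ) := by
      rw [show ((68719476736000000:ℝ)) = 2^42*5^6 by norm_num]; exact log_node 42 6 _ (by norm_num)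
    exact (trap_core (by norm_num) (by norm_num) (by norm_num) (by norm_num) l1 l2).trans (by norm_num)
  have p24 : ∫ t in (68719476736000000:ℝ)..(85899345920000000:ℝ), 1/Real.log t^11 ≤ 0.056014 := by
    have l1 : (38.768242:ℝ) ≤ Real.log (68719476736000000:ℝ) := by
      rw [show ((68719476736000000:ℝ)) = 2^42*5^6 by norm_num]; exact log_node 42 6 _ (by norm_num)
    have l2 : (38.991291:ℝ) ≤ Real.log (85899345920000000:ℝ) := by
      rw [show ((85899345920000000:ℝ)) = 2^40*5^7 by norm_num]; exact log_node 40 7 _ (by norm_num)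
    exact (trap_core (by norm_num) (by norm_num) (by norm_num) (by norm_num) l1 l2).trans (by norm_num)
  have p25 : ∫ t in (85899345920000000:ℝ)..(107374182400000000:ℝ), 1/Real.log t^11 ≤ 0.065747 := by
    have l1 : (38.991291:ℝ) ≤ Real.log (85899345920000000:ℝ) := by
      rw [show ((85899345920000000:ℝ)) = 2^40*5^7 by norm_num]; exact log_node 40 7 _ (by norm_num)
    have l2 : (39.21434:ℝ) ≤ Real.log (107374182400000000:ℝ) := by
      rw [show ((107374182400000000:ℝ)) = 2^38*5^8 by norm_num]; exact log_node 38 8 _ (by norm_num)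
    exact (trap_core (by norm_num) (by norm_num) (by norm_num) (by norm_num) l1 l2).trans (by norm_num)
  have p26 : ∫ t in (107374182400000000:ℝ)..(134217728000000000:ℝ), 1/Real.log t^11 ≤ 0.077199 := by
    have l1 : (39.21434:ℝ) ≤ Real.log (107374182400000000:ℝ) := by
      rw [show ((107374182400000000:ℝ)) = 2^38*5^8 by norm_num]; exact log_node 38 8 _ (by norm_num)
    have l2 : (39.437389:ℝ) ≤ Real.log (134217728000000000:ℝ) := by
      rw [show ((134217728000000000:ℝ)) = 2^36*5^9 by norm_num]; exact log_node 36 9 _ (by norm_num)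
    exact (trap_core (by norm_num) (by norm_num) (by norm_num) (by norm_num) l1 l2).trans (by norm_num)
  have p27 : ∫ t in (134217728000000000:ℝ)..(167772160000000000:ℝ), 1/Real.log t^11 ≤ 0.090678 := by
    have l1 : (39.437389:ℝ) ≤ Real.log (134217728000000000:ℝ) := by
      rw [show ((134217728000000000:ℝ)) = 2^36*5^9 by norm_num]; exact log_node 36 9 _ (by norm_num)
    have l2 : (39.660438:ℝ) ≤ Real.log (167772160000000000:ℝ) := by
      rw [show ((167772160000000000:ℝ)) = 2^34*5^10 by norm_num]; exact log_node 34 10 _ (by norm_num)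
    exact (trap_core (by norm_num) (by norm_num) (by norm_num) (by norm_num) l1 l2).trans (by norm_num)
  have p28 : ∫ t in (167772160000000000:ℝ)..(209715200000000000:ℝ), 1/Real.log t^11 ≤ 0.106547 := by
    have l1 : (39.660438:ℝ) ≤ Real.log (167772160000000000:ℝ) := by
      rw [show ((167772160000000000:ℝ)) = 2^34*5^10 by norm_num]; exact log_node 34 10 _ (by norm_num)
    have l2 : (39.883487:ℝ) ≤ Real.log (209715200000000000:ℝ) := by
      rw [show ((209715200000000000:ℝ)) = 2^32*5^11 by norm_num]; exact log_node 32 11 _ (by norm_num)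
    exact (trap_core (by norm_num) (by norm_num) (by norm_num) (by norm_num) l1 l2).trans (by norm_num)
  have p29 : ∫ t in (209715200000000000:ℝ)..(262144000000000000:ℝ), 1/Real.log t^11 ≤ 0.125236 := by
    have l1 : (39.883487:ℝ) ≤ Real.log (209715200000000000:ℝ) := by
      rw [show ((209715200000000000:ℝ)) = 2^32*5^11 by norm_num]; exact log_node 32 11 _ (by norm_num)
    have l2 : (40.106536:ℝ) ≤ Real.log (262144000000000000:ℝ) := by
      rw [show ((262144000000000000:ℝ)) = 2^30*5^12 by norm_num]; exact log_node 30 12 _ (by norm_num)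
    exact (trap_core (by norm_num) (by norm_num) (by norm_num) (by norm_num) l1 l2).trans (by norm_num)
  have p30 : ∫ t in (262144000000000000:ℝ)..(327680000000000000:ℝ), 1/Real.log t^11 ≤ 0.147255 := by
    have l1 : (40.106536:ℝ) ≤ Real.log (262144000000000000:ℝ) := by
      rw [show ((262144000000000000:ℝ)) = 2^30*5^12 by norm_num]; exact log_node 30 12 _ (by norm_num)
    have l2 : (40.329585:ℝ) ≤ Real.log (327680000000000000:ℝ) := by
      rw [show ((327680000000000000:ℝ)) = 2^28*5^13 by norm_num]; exact log_node 28 13 _ (by norm_num)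
    exact (trap_core (by norm_num) (by norm_num) (by norm_num) (by norm_num) l1 l2).trans (by norm_num)
  have p31 : ∫ t in (327680000000000000:ℝ)..(409600000000000000:ℝ), 1/Real.log t^11 ≤ 0.173203 := by
    have l1 : (40.329585:ℝ) ≤ Real.log (327680000000000000:ℝ) := by
      rw [show ((327680000000000000:ℝ)) = 2^28*5^13 by norm_num]; exact log_node 28 13 _ (by norm_num)
    have l2 : (40.552634:ℝ) ≤ Real.log (409600000000000000:ℝ) := by
      rw [show ((409600000000000000:ℝ)) = 2^26*5^14 by norm_num]; exact log_node 26 14 _ (by norm_num)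
    exact (trap_core (by norm_num) (by norm_num) (by norm_num) (by norm_num) l1 l2).trans (by norm_num)
  have p32 : ∫ t in (409600000000000000:ℝ)..(512000000000000000:ℝ), 1/Real.log t^11 ≤ 0.203792 := by
    have l1 : (40.552634:ℝ) ≤ Real.log (409600000000000000:ℝ) := by
      rw [show ((409600000000000000:ℝ)) = 2^26*5^14 by norm_num]; exact log_node 26 14 _ (by norm_num)
    have l2 : (40.775683:ℝ) ≤ Real.log (512000000000000000:ℝ) := by
      rw [show ((512000000000000000:ℝ)) = 2^24*5^15 by norm_num]; exact log_node 24 15 _ (by norm_num)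
    exact (trap_core (by norm_num) (by norm_num) (by norm_num) (by norm_num) l1 l2).trans (by norm_num)
  have p33 : ∫ t in (512000000000000000:ℝ)..(640000000000000000:ℝ), 1/Real.log t^11 ≤ 0.239862 := by
    have l1 : (40.775683:ℝ) ≤ Real.log (512000000000000000:ℝ) := by
      rw [show ((512000000000000000:ℝ)) = 2^24*5^15 by norm_num]; exact log_node 24 15 _ (by norm_num)
    have l2 : (40.998732:ℝ) ≤ Real.log (640000000000000000:ℝ) := by
      rw [show ((640000000000000000:ℝ)) = 2^22*5^16 by norm_num]; exact log_node 22 16 _ (by norm_num)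
    exact (trap_core (by norm_num) (by norm_num) (by norm_num) (by norm_num) l1 l2).trans (by norm_num)
  have p34 : ∫ t in (640000000000000000:ℝ)..(800000000000000000:ℝ), 1/Real.log t^11 ≤ 0.28241 := by
    have l1 : (40.998732:ℝ) ≤ Real.log (640000000000000000:ℝ) := by
      rw [show ((640000000000000000:ℝ)) = 2^22*5^16 by norm_num]; exact log_node 22 16 _ (by norm_num)
    have l2 : (41.221781:ℝ) ≤ Real.log (800000000000000000:ℝ) := by
      rw [show ((800000000000000000:ℝ)) = 2^20*5^17 by norm_num]; exact log_node 20 17 _ (by norm_num)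
    exact (trap_core (by norm_num) (by norm_num) (by norm_num) (by norm_num) l1 l2).trans (by norm_num)
  have p35 : ∫ t in (800000000000000000:ℝ)..(1000000000000000000:ℝ), 1/Real.log t^11 ≤ 0.332612 := by
    have l1 : (41.221781:ℝ) ≤ Real.log (800000000000000000:ℝ) := by
      rw [show ((800000000000000000:ℝ)) = 2^20*5^17 by norm_num]; exact log_node 20 17 _ (by norm_num)
    have l2 : (41.44483:ℝ) ≤ Real.log (1000000000000000000:ℝ) := by
      rw [show ((1000000000000000000:ℝ)) = 2^18*5^18 by norm_num]; exact log_node 18 18 _ (by norm_num)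
    exact (trap_core (by norm_num) (by norm_num) (by norm_num) (by norm_num) l1 l2).trans (by norm_num)
  have s35 : ∫ t in (800000000000000000:ℝ)..(1000000000000000000:ℝ), 1/Real.log t^11 ≤ 0.332612 := p35
  have s34 : ∫ t in (640000000000000000:ℝ)..(1000000000000000000:ℝ), 1/Real.log t^11 ≤ 0.615022 := by
    rw [← intervalIntegral.integral_add_adjacent_intervals
      (intIntegrable_one_div_log_pow 11 (by norm_num) (by norm_num) : IntervalIntegrable _ volume (640000000000000000:ℝ) (800000000000000000:ℝ))
      (intIntegrable_one_div_log_pow 11 (by norm_num) (by norm_num) : IntervalIntegrable _ volume (800000000000000000:ℝ) (1000000000000000000:ℝ))]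
    linarith [p34, s35]
  have s33 : ∫ t in (512000000000000000:ℝ)..(1000000000000000000:ℝ), 1/Real.log t^11 ≤ 0.854884 := by
    rw [← intervalIntegral.integral_add_adjacent_intervals
      (intIntegrable_one_div_log_pow 11 (by norm_num) (by norm_num) : IntervalIntegrable _ volume (512000000000000000:ℝ) (640000000000000000:ℝ))
      (intIntegrable_one_div_log_pow 11 (by norm_num) (by norm_num) : IntervalIntegrable _ volume (640000000000000000:ℝ) (1000000000000000000:ℝ))]
    linarith [p33, s34]
  have s32 : ∫ t in (409600000000000000:ℝ)..(1000000000000000000:ℝ), 1/Real.log t^11 ≤ 1.058676 := by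
    rw [← intervalIntegral.integral_add_adjacent_intervals
      (intIntegrable_one_div_log_pow 11 (by norm_num) (by norm_num) : IntervalIntegrable _ volume (409600000000000000:ℝ) (512000000000000000:ℝ))
      (intIntegrable_one_div_log_pow 11 (by norm_num) (by norm_num) : IntervalIntegrable _ volume (512000000000000000:ℝ) (1000000000000000000:ℝ))]
    linarith [p32, s33]
  have s31 : ∫ t in (327680000000000000:ℝ)..(1000000000000000000:ℝ), 1/Real.log t^11 ≤ 1.231879 := by
    rw [← intervalIntegral.integral_add_adjacent_intervals
      (intIntegrable_one_div_log_pow 11 (by norm_num) (by norm_num) : IntervalIntegrable _ volume (327680000000000000:ℝ) (409600000000000000:ℝ))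
      (intIntegrable_one_div_log_pow 11 (by norm_num) (by norm_num) : IntervalIntegrable _ volume (409600000000000000:ℝ) (1000000000000000000:ℝ))]
    linarith [p31, s32]
  have s30 : ∫ t in (262144000000000000:ℝ)..(1000000000000000000:ℝ), 1/Real.log t^11 ≤ 1.379134 := by
    rw [← intervalIntegral.integral_add_adjacent_intervals
      (intIntegrable_one_div_log_pow 11 (by norm_num) (by norm_num) : IntervalIntegrable _ volume (262144000000000000:ℝ) (327680000000000000:ℝ))
      (intIntegrable_one_div_log_pow 11 (by norm_num) (by norm_num) : IntervalIntegrable _ volume (327680000000000000:ℝ) (1000000000000000000:ℝ))]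
    linarith [p30, s31]
  have s29 : ∫ t in (209715200000000000:ℝ)..(1000000000000000000:ℝ), 1/Real.log t^11 ≤ 1.50437 := by
    rw [← intervalIntegral.integral_add_adjacent_intervals
      (intIntegrable_one_div_log_pow 11 (by norm_num) (by norm_num) : IntervalIntegrable _ volume (209715200000000000:ℝ) (262144000000000000:ℝ))
      (intIntegrable_one_div_log_pow 11 (by norm_num) (by norm_num) : IntervalIntegrable _ volume (262144000000000000:ℝ) (1000000000000000000:ℝ))]
    linarith [p29, s30]
  have s28 : ∫ t in (167772160000000000:ℝ)..(1000000000000000000:ℝ), 1/Real.log t^11 ≤ 1.610917 := by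
    rw [← intervalIntegral.integral_add_adjacent_intervals
      (intIntegrable_one_div_log_pow 11 (by norm_num) (by norm_num) : IntervalIntegrable _ volume (167772160000000000:ℝ) (209715200000000000:ℝ))
      (intIntegrable_one_div_log_pow 11 (by norm_num) (by norm_num) : IntervalIntegrable _ volume (209715200000000000:ℝ) (1000000000000000000:ℝ))]
    linarith [p28, s29]
  have s27 : ∫ t in (134217728000000000:ℝ)..(1000000000000000000:ℝ), 1/Real.log t^11 ≤ 1.701595 := by
    rw [← intervalIntegral.integral_add_adjacent_intervals
      (intIntegrable_one_div_log_pow 11 (by norm_num) (by norm_num) : IntervalIntegrable _ volume (134217728000000000:ℝ) (167772160000000000:ℝ))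
      (intIntegrable_one_div_log_pow 11 (by norm_num) (by norm_num) : IntervalIntegrable _ volume (167772160000000000:ℝ) (1000000000000000000:ℝ))]
    linarith [p27, s28]
  have s26 : ∫ t in (107374182400000000:ℝ)..(1000000000000000000:ℝ), 1/Real.log t^11 ≤ 1.778794 := by
    rw [← intervalIntegral.integral_add_adjacent_intervals
      (intIntegrable_one_div_log_pow 11 (by norm_num) (by norm_num) : IntervalIntegrable _ volume (107374182400000000:ℝ) (134217728000000000:ℝ))
      (intIntegrable_one_div_log_pow 11 (by norm_num) (by norm_num) : IntervalIntegrable _ volume (134217728000000000:ℝ) (1000000000000000000:ℝ))]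
    linarith [p26, s27]
  have s25 : ∫ t in (85899345920000000:ℝ)..(1000000000000000000:ℝ), 1/Real.log t^11 ≤ 1.844541 := by
    rw [← intervalIntegral.integral_add_adjacent_intervals
      (intIntegrable_one_div_log_pow 11 (by norm_num) (by norm_num) : IntervalIntegrable _ volume (85899345920000000:ℝ) (107374182400000000:ℝ))
      (intIntegrable_one_div_log_pow 11 (by norm_num) (by norm_num) : IntervalIntegrable _ volume (107374182400000000:ℝ) (1000000000000000000:ℝ))]
    linarith [p25, s26]
  have s24 : ∫ t in (68719476736000000:ℝ)..(1000000000000000000:ℝ), 1/Real.log t^11 ≤ 1.900555 := by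
    rw [← intervalIntegral.integral_add_adjacent_intervals
      (intIntegrable_one_div_log_pow 11 (by norm_num) (by norm_num) : IntervalIntegrable _ volume (68719476736000000:ℝ) (85899345920000000:ℝ))
      (intIntegrable_one_div_log_pow 11 (by norm_num) (by norm_num) : IntervalIntegrable _ volume (85899345920000000:ℝ) (1000000000000000000:ℝ))]
    linarith [p24, s25]
  have s23 : ∫ t in (54975581388800000:ℝ)..(1000000000000000000:ℝ), 1/Real.log t^11 ≤ 1.948295 := by
    rw [← intervalIntegral.integral_add_adjacent_intervals
      (intIntegrable_one_div_log_pow 11 (by norm_num) (by norm_num) : IntervalIntegrable _ volume (54975581388800000:ℝ) (68719476736000000:ℝ))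
      (intIntegrable_one_div_log_pow 11 (by norm_num) (by norm_num) : IntervalIntegrable _ volume (68719476736000000:ℝ) (1000000000000000000:ℝ))]
    linarith [p23, s24]
  have s22 : ∫ t in (43980465111040000:ℝ)..(1000000000000000000:ℝ), 1/Real.log t^11 ≤ 1.988997 := by
    rw [← intervalIntegral.integral_add_adjacent_intervals
      (intIntegrable_one_div_log_pow 11 (by norm_num) (by norm_num) : IntervalIntegrable _ volume (43980465111040000:ℝ) (54975581388800000:ℝ))
      (intIntegrable_one_div_log_pow 11 (by norm_num) (by norm_num) : IntervalIntegrable _ volume (54975581388800000:ℝ) (1000000000000000000:ℝ))]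
    linarith [p22, s23]
  have s21 : ∫ t in (35184372088832000:ℝ)..(1000000000000000000:ℝ), 1/Real.log t^11 ≤ 2.023712 := by
    rw [← intervalIntegral.integral_add_adjacent_intervals
      (intIntegrable_one_div_log_pow 11 (by norm_num) (by norm_num) : IntervalIntegrable _ volume (35184372088832000:ℝ) (43980465111040000:ℝ))
      (intIntegrable_one_div_log_pow 11 (by norm_num) (by norm_num) : IntervalIntegrable _ volume (43980465111040000:ℝ) (1000000000000000000:ℝ))]
    linarith [p21, s22]
  have s20 : ∫ t in (28147497671065600:ℝ)..(1000000000000000000:ℝ), 1/Real.log t^11 ≤ 2.053331 := by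
    rw [← intervalIntegral.integral_add_adjacent_intervals
      (intIntegrable_one_div_log_pow 11 (by norm_num) (by norm_num) : IntervalIntegrable _ volume (28147497671065600:ℝ) (35184372088832000:ℝ))
      (intIntegrable_one_div_log_pow 11 (by norm_num) (by norm_num) : IntervalIntegrable _ volume (35184372088832000:ℝ) (1000000000000000000:ℝ))]
    linarith [p20, s21]
  have s19 : ∫ t in (22517998136852480:ℝ)..(1000000000000000000:ℝ), 1/Real.log t^11 ≤ 2.078613 := by
    rw [← intervalIntegral.integral_add_adjacent_intervals
      (intIntegrable_one_div_log_pow 11 (by norm_num) (by norm_num) : IntervalIntegrable _ volume (22517998136852480:ℝ) (28147497671065600:ℝ))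
      (intIntegrable_one_div_log_pow 11 (by norm_num) (by norm_num) : IntervalIntegrable _ volume (28147497671065600:ℝ) (1000000000000000000:ℝ))]
    linarith [p19, s20]
  have s18 : ∫ t in (18014398509481984:ℝ)..(1000000000000000000:ℝ), 1/Real.log t^11 ≤ 2.1002 := by
    rw [← intervalIntegral.integral_add_adjacent_intervals
      (intIntegrable_one_div_log_pow 11 (by norm_num) (by norm_num) : IntervalIntegrable _ volume (18014398509481984:ℝ) (22517998136852480:ℝ))
      (intIntegrable_one_div_log_pow 11 (by norm_num) (by norm_num) : IntervalIntegrable _ volume (22517998136852480:ℝ) (1000000000000000000:ℝ))]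
    linarith [p18, s19]
  have s17 : ∫ t in (9007199254740992:ℝ)..(1000000000000000000:ℝ), 1/Real.log t^11 ≤ 2.149873 := by
    rw [← intervalIntegral.integral_add_adjacent_intervals
      (intIntegrable_one_div_log_pow 11 (by norm_num) (by norm_num) : IntervalIntegrable _ volume (9007199254740992:ℝ) (18014398509481984:ℝ))
      (intIntegrable_one_div_log_pow 11 (by norm_num) (by norm_num) : IntervalIntegrable _ volume (18014398509481984:ℝ) (1000000000000000000:ℝ))]
    linarith [p17, s18]
  have s16 : ∫ t in (4503599627370496:ℝ)..(1000000000000000000:ℝ), 1/Real.log t^11 ≤ 2.180445 := by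
    rw [← intervalIntegral.integral_add_adjacent_intervals
      (intIntegrable_one_div_log_pow 11 (by norm_num) (by norm_num) : IntervalIntegrable _ volume (4503599627370496:ℝ) (9007199254740992:ℝ))
      (intIntegrable_one_div_log_pow 11 (by norm_num) (by norm_num) : IntervalIntegrable _ volume (9007199254740992:ℝ) (1000000000000000000:ℝ))]
    linarith [p16, s17]
  have s15 : ∫ t in (2251799813685248:ℝ)..(1000000000000000000:ℝ), 1/Real.log t^11 ≤ 2.199337 := by
    rw [← intervalIntegral.integral_add_adjacent_intervals
      (intIntegrable_one_div_log_pow 11 (by norm_num) (by norm_num) : IntervalIntegrable _ volume (2251799813685248:ℝ) (4503599627370496:ℝ))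
      (intIntegrable_one_div_log_pow 11 (by norm_num) (by norm_num) : IntervalIntegrable _ volume (4503599627370496:ℝ) (1000000000000000000:ℝ))]
    linarith [p15, s16]
  have s14 : ∫ t in (1125899906842624:ℝ)..(1000000000000000000:ℝ), 1/Real.log t^11 ≤ 2.21106 := by
    rw [← intervalIntegral.integral_add_adjacent_intervals
      (intIntegrable_one_div_log_pow 11 (by norm_num) (by norm_num) : IntervalIntegrable _ volume (1125899906842624:ℝ) (2251799813685248:ℝ))
      (intIntegrable_one_div_log_pow 11 (by norm_num) (by norm_num) : IntervalIntegrable _ volume (2251799813685248:ℝ) (1000000000000000000:ℝ))]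
    linarith [p14, s15]
  have s13 : ∫ t in (562949953421312:ℝ)..(1000000000000000000:ℝ), 1/Real.log t^11 ≤ 2.218366 := by
    rw [← intervalIntegral.integral_add_adjacent_intervals
      (intIntegrable_one_div_log_pow 11 (by norm_num) (by norm_num) : IntervalIntegrable _ volume (562949953421312:ℝ) (1125899906842624:ℝ))
      (intIntegrable_one_div_log_pow 11 (by norm_num) (by norm_num) : IntervalIntegrable _ volume (1125899906842624:ℝ) (1000000000000000000:ℝ))]
    linarith [p13, s14]
  have s12 : ∫ t in (281474976710656:ℝ)..(1000000000000000000:ℝ), 1/Real.log t^11 ≤ 2.22294 := by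
    rw [← intervalIntegral.integral_add_adjacent_intervals
      (intIntegrable_one_div_log_pow 11 (by norm_num) (by norm_num) : IntervalIntegrable _ volume (281474976710656:ℝ) (562949953421312:ℝ))
      (intIntegrable_one_div_log_pow 11 (by norm_num) (by norm_num) : IntervalIntegrable _ volume (562949953421312:ℝ) (1000000000000000000:ℝ))]
    linarith [p12, s13]
  have s11 : ∫ t in (140737488355328:ℝ)..(1000000000000000000:ℝ), 1/Real.log t^11 ≤ 2.225817 := by
    rw [← intervalIntegral.integral_add_adjacent_intervals
      (intIntegrable_one_div_log_pow 11 (by norm_num) (by norm_num) : IntervalIntegrable _ volume (140737488355328:ℝ) (281474976710656:ℝ))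
      (intIntegrable_one_div_log_pow 11 (by norm_num) (by norm_num) : IntervalIntegrable _ volume (281474976710656:ℝ) (1000000000000000000:ℝ))]
    linarith [p11, s12]
  have s10 : ∫ t in (70368744177664:ℝ)..(1000000000000000000:ℝ), 1/Real.log t^11 ≤ 2.227636 := by
    rw [← intervalIntegral.integral_add_adjacent_intervals
      (intIntegrable_one_div_log_pow 11 (by norm_num) (by norm_num) : IntervalIntegrable _ volume (70368744177664:ℝ) (140737488355328:ℝ))
      (intIntegrable_one_div_log_pow 11 (by norm_num) (by norm_num) : IntervalIntegrable _ volume (140737488355328:ℝ) (1000000000000000000:ℝ))]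
    linarith [p10, s11]
  have s9 : ∫ t in (35184372088832:ℝ)..(1000000000000000000:ℝ), 1/Real.log t^11 ≤ 2.228792 := by
    rw [← intervalIntegral.integral_add_adjacent_intervals
      (intIntegrable_one_div_log_pow 11 (by norm_num) (by norm_num) : IntervalIntegrable _ volume (35184372088832:ℝ) (70368744177664:ℝ))
      (intIntegrable_one_div_log_pow 11 (by norm_num) (by norm_num) : IntervalIntegrable _ volume (70368744177664:ℝ) (1000000000000000000:ℝ))]
    linarith [p9, s10]
  have s8 : ∫ t in (8796093022208:ℝ)..(1000000000000000000:ℝ), 1/Real.log t^11 ≤ 2.230078 := by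
    rw [← intervalIntegral.integral_add_adjacent_intervals
      (intIntegrable_one_div_log_pow 11 (by norm_num) (by norm_num) : IntervalIntegrable _ volume (8796093022208:ℝ) (35184372088832:ℝ))
      (intIntegrable_one_div_log_pow 11 (by norm_num) (by norm_num) : IntervalIntegrable _ volume (35184372088832:ℝ) (1000000000000000000:ℝ))]
    linarith [p8, s9]
  have s7 : ∫ t in (274877906944:ℝ)..(1000000000000000000:ℝ), 1/Real.log t^11 ≤ 2.231343 := by
    rw [← intervalIntegral.integral_add_adjacent_intervals
      (intIntegrable_one_div_log_pow 11 (by norm_num) (by norm_num) : IntervalIntegrable _ volume (274877906944:ℝ) (8796093022208:ℝ))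
      (intIntegrable_one_div_log_pow 11 (by norm_num) (by norm_num) : IntervalIntegrable _ volume (8796093022208:ℝ) (1000000000000000000:ℝ))]
    linarith [p7, s8]
  have s6 : ∫ t in (8589934592:ℝ)..(1000000000000000000:ℝ), 1/Real.log t^11 ≤ 2.231523 := by
    rw [← intervalIntegral.integral_add_adjacent_intervals
      (intIntegrable_one_div_log_pow 11 (by norm_num) (by norm_num) : IntervalIntegrable _ volume (8589934592:ℝ) (274877906944:ℝ))
      (intIntegrable_one_div_log_pow 11 (by norm_num) (by norm_num) : IntervalIntegrable _ volume (274877906944:ℝ) (1000000000000000000:ℝ))]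
    linarith [p6, s7]
  have s5 : ∫ t in (268435456:ℝ)..(1000000000000000000:ℝ), 1/Real.log t^11 ≤ 2.231556 := by
    rw [← intervalIntegral.integral_add_adjacent_intervals
      (intIntegrable_one_div_log_pow 11 (by norm_num) (by norm_num) : IntervalIntegrable _ volume (268435456:ℝ) (8589934592:ℝ))
      (intIntegrable_one_div_log_pow 11 (by norm_num) (by norm_num) : IntervalIntegrable _ volume (8589934592:ℝ) (1000000000000000000:ℝ))]
    linarith [p5, s6]
  have s4 : ∫ t in (8388608:ℝ)..(1000000000000000000:ℝ), 1/Real.log t^11 ≤ 2.231565 := by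
    rw [← intervalIntegral.integral_add_adjacent_intervals
      (intIntegrable_one_div_log_pow 11 (by norm_num) (by norm_num) : IntervalIntegrable _ volume (8388608:ℝ) (268435456:ℝ))
      (intIntegrable_one_div_log_pow 11 (by norm_num) (by norm_num) : IntervalIntegrable _ volume (268435456:ℝ) (1000000000000000000:ℝ))]
    linarith [p4, s5]
  have s3 : ∫ t in (262144:ℝ)..(1000000000000000000:ℝ), 1/Real.log t^11 ≤ 2.231569 := by
    rw [← intervalIntegral.integral_add_adjacent_intervals
      (intIntegrable_one_div_log_pow 11 (by norm_num) (by norm_num) : IntervalIntegrable _ volume (262144:ℝ) (8388608:ℝ))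
      (intIntegrable_one_div_log_pow 11 (by norm_num) (by norm_num) : IntervalIntegrable _ volume (8388608:ℝ) (1000000000000000000:ℝ))]
    linarith [p3, s4]
  have s2 : ∫ t in (8192:ℝ)..(1000000000000000000:ℝ), 1/Real.log t^11 ≤ 2.231574 := by
    rw [← intervalIntegral.integral_add_adjacent_intervals
      (intIntegrable_one_div_log_pow 11 (by norm_num) (by norm_num) : IntervalIntegrable _ volume (8192:ℝ) (262144:ℝ))
      (intIntegrable_one_div_log_pow 11 (by norm_num) (by norm_num) : IntervalIntegrable _ volume (262144:ℝ) (1000000000000000000:ℝ))]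
    linarith [p2, s3]
  have s1 : ∫ t in (256:ℝ)..(1000000000000000000:ℝ), 1/Real.log t^11 ≤ 2.231601 := by
    rw [← intervalIntegral.integral_add_adjacent_intervals
      (intIntegrable_one_div_log_pow 11 (by norm_num) (by norm_num) : IntervalIntegrable _ volume (256:ℝ) (8192:ℝ))
      (intIntegrable_one_div_log_pow 11 (by norm_num) (by norm_num) : IntervalIntegrable _ volume (8192:ℝ) (1000000000000000000:ℝ))]
    linarith [p1, s2]
  have s0 : ∫ t in (8:ℝ)..(1000000000000000000:ℝ), 1/Real.log t^11 ≤ 2.271049 := by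
    rw [← intervalIntegral.integral_add_adjacent_intervals
      (intIntegrable_one_div_log_pow 11 (by norm_num) (by norm_num) : IntervalIntegrable _ volume (8:ℝ) (256:ℝ))
      (intIntegrable_one_div_log_pow 11 (by norm_num) (by norm_num) : IntervalIntegrable _ volume (256:ℝ) (1000000000000000000:ℝ))]
    linarith [p0, s1]
  exact s0

lemma integral_split_G {a b : ℝ} (ha : 1 < a) (hab : a ≤ b) :
    ∫ t in a..b, 1/Real.log t
      = Gfun b - Gfun a + 3628800 * ∫ t in a..b, 1/Real.log t^11 := by
  have h1 := intIntegrable_one_div_log ha hab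
  have h11 := intIntegrable_one_div_log_pow 11 ha hab
  have hder : ∀ t ∈ uIcc a b,
      HasDerivAt Gfun (1/Real.log t - 3628800*(1/Real.log t^11)) t := by
    intro t htm
    rw [uIcc_of_le hab] at htm
    have h := Gfun_deriv (lt_of_lt_of_le ha htm.1)
    convert h using 1
    ring
  have hint : IntervalIntegrable (fun t => 1/Real.log t - 3628800*(1/Real.log t^11))
      volume a b := h1.sub (h11.const_mul 3628800)
  have heq := intervalIntegral.integral_eq_sub_of_hasDerivAt hder hint
  rw [intervalIntegral.integral_sub h1 (h11.const_mul 3628800),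
      intervalIntegral.integral_const_mul] at heq
  linarith

lemma LX0_ge : (41.4448308180:ℝ) ≤ Real.log 1000000000000000000 := by
  rw [show (1000000000000000000:ℝ) = 2^18*5^18 by norm_num,
      Real.log_mul (by positivity) (by positivity), Real.log_pow, Real.log_pow]
  have h2 := Real.log_two_gt_d9
  have h5 := log5_gt
  push_cast
  nlinarith

lemma LX0_le : Real.log 1000000000000000000 ≤ 41.4482058504 := by
  rw [show (1000000000000000000:ℝ) = 2^18*5^18 by norm_num,
      Real.log_mul (by positivity) (by positivity), Real.log_pow, Real.log_pow]
  have h2 := Real.log_two_lt_d9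
  have h5 := log5_lt
  push_cast
  nlinarith

lemma G8_ge : (2540:ℝ) ≤ Gfun 8 := by
  have hu : Real.log 8 ≤ 2.0794415424 := by
    rw [show (8:ℝ) = 2^3 by norm_num, Real.log_pow]
    have := Real.log_two_lt_d9
    push_cast
    nlinarith
  have hl : (2:ℝ) ≤ Real.log 8 := by
    rw [show (8:ℝ) = 2^3 by norm_num, Real.log_pow]
    have := Real.log_two_gt_d9
    push_cast
    nlinarith
  have hp : (0:ℝ) < Real.log 8 := by linarith
  calc (2540:ℝ) ≤ 8/(2.0794415424:ℝ)^1 + 1*(8/(2.0794415424:ℝ)^2) + 2*(8/(2.0794415424:ℝ)^3)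
        + 6*(8/(2.0794415424:ℝ)^4) + 24*(8/(2.0794415424:ℝ)^5) + 120*(8/(2.0794415424:ℝ)^6)
        + 720*(8/(2.0794415424:ℝ)^7) + 5040*(8/(2.0794415424:ℝ)^8)
        + 40320*(8/(2.0794415424:ℝ)^9) + 362880*(8/(2.0794415424:ℝ)^10) := by norm_num
    _ ≤ Gfun 8 := by
        unfold Gfun
        gcongr <;> first | exact hu | positivity | linarith

lemma head_bound :
    ∫ t in (2:ℝ)..(1000000000000000000:ℝ), 1/Real.log t ≤ Ffun 1000000000000000000 := by
  have hsplit2 : ∫ t in (2:ℝ)..(1000000000000000000:ℝ), 1/Real.log t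
      = (∫ t in (2:ℝ)..(8:ℝ), 1/Real.log t)
        + ∫ t in (8:ℝ)..(1000000000000000000:ℝ), 1/Real.log t :=
    (intervalIntegral.integral_add_adjacent_intervals
      (intIntegrable_one_div_log (by norm_num) (by norm_num))
      (intIntegrable_one_div_log (by norm_num) (by norm_num))).symm
  have h28 : ∫ t in (2:ℝ)..(8:ℝ), 1/Real.log t ≤ 8.66 := by
    have hmono : ∫ t in (2:ℝ)..(8:ℝ), 1/Real.log t
        ≤ ∫ _t in (2:ℝ)..(8:ℝ), (1/(0.6931471803:ℝ)) := by
      apply intervalIntegral.integral_mono_on (by norm_num)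
        (intIntegrable_one_div_log (by norm_num) (by norm_num)) intervalIntegrable_const
      intro t htm
      have hlg : (0.6931471803:ℝ) ≤ Real.log t := by
        have h2 := Real.log_two_gt_d9
        have : Real.log 2 ≤ Real.log t := Real.log_le_log (by norm_num) htm.1
        linarith
      exact one_div_le_one_div_of_le (by norm_num) hlg
    rw [intervalIntegral.integral_const, smul_eq_mul] at hmono
    calc ∫ t in (2:ℝ)..(8:ℝ), 1/Real.log t ≤ (8-2)*(1/(0.6931471803:ℝ)) := hmono
      _ ≤ 8.66 := by norm_num
  have hftc := integral_split_G (a := 8) (b := 1000000000000000000) (by norm_num) (by norm_num)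
  have hGF : Gfun 1000000000000000000
      = Ffun 1000000000000000000
        - 1260*((1000000000000000000:ℝ)/Real.log 1000000000000000000^8)
        + 40320*((1000000000000000000:ℝ)/Real.log 1000000000000000000^9)
        + 362880*((1000000000000000000:ℝ)/Real.log 1000000000000000000^10) := by
    unfold Gfun Ffun
    ring
  have hLpos : (0:ℝ) < Real.log 1000000000000000000 := by
    have := LX0_ge; linarith
  have hT8 : (144652070:ℝ)
      ≤ 1260*((1000000000000000000:ℝ)/Real.log 1000000000000000000^8) := by
    have hL := LX0_le
    calc (144652070:ℝ) ≤ 1260*((1000000000000000000:ℝ)/(41.4482058504:ℝ)^8) := by norm_num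
      _ ≤ 1260*((1000000000000000000:ℝ)/Real.log 1000000000000000000^8) := by
          gcongr <;> first | exact hL | positivity | linarith
  have hT9 : 40320*((1000000000000000000:ℝ)/Real.log 1000000000000000000^9)
      ≤ 111760204 := by
    have hL := LX0_ge
    calc 40320*((1000000000000000000:ℝ)/Real.log 1000000000000000000^9)
        ≤ 40320*((1000000000000000000:ℝ)/(41.4448308180:ℝ)^9) := by
          gcongr <;> first | exact hL | positivity | linarith
      _ ≤ 111760204 := by norm_num
  have hT10 : 362880*((1000000000000000000:ℝ)/Real.log 1000000000000000000^10)
      ≤ 24269416 := by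
    have hL := LX0_ge
    calc 362880*((1000000000000000000:ℝ)/Real.log 1000000000000000000^10)
        ≤ 362880*((1000000000000000000:ℝ)/(41.4448308180:ℝ)^10) := by
          gcongr <;> first | exact hL | positivity | linarith
      _ ≤ 24269416 := by norm_num
  have hq := quad_bound
  have hG8 := G8_ge
  linarith

lemma tail_bound {x : ℝ} (hx : (1000000000000000000:ℝ) ≤ x) :
    ∫ t in (1000000000000000000:ℝ)..x, 1/Real.log t
      ≤ Ffun x - Ffun 1000000000000000000 := by
  have hE1 : (1:ℝ) < 1000000000000000000 := by norm_num
  have h1 := intIntegrable_one_div_log hE1 hx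
  have h8 := intIntegrable_one_div_log_pow 8 hE1 hx
  have h9 := intIntegrable_one_div_log_pow 9 hE1 hx
  have hint : IntervalIntegrable
      (fun t => 1/Real.log t + 1260*(1/Real.log t^8) - 50400*(1/Real.log t^9))
      volume 1000000000000000000 x := (h1.add (h8.const_mul 1260)).sub (h9.const_mul 50400)
  have hder : ∀ t ∈ uIcc (1000000000000000000:ℝ) x,
      HasDerivAt Ffun (1/Real.log t + 1260*(1/Real.log t^8) - 50400*(1/Real.log t^9)) t := by
    intro t htm
    rw [uIcc_of_le hx] at htm
    have h := Ffun_deriv (lt_of_lt_of_le hE1 htm.1)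
    convert h using 1
    ring
  have heq := intervalIntegral.integral_eq_sub_of_hasDerivAt hder hint
  have hmono : ∫ t in (1000000000000000000:ℝ)..x, 1/Real.log t
      ≤ ∫ t in (1000000000000000000:ℝ)..x,
          (1/Real.log t + 1260*(1/Real.log t^8) - 50400*(1/Real.log t^9)) := by
    apply intervalIntegral.integral_mono_on hx h1 hint
    intro t htm
    have hL : (41:ℝ) ≤ Real.log t := by
      have h0 := LX0_ge
      have hmon : Real.log 1000000000000000000 ≤ Real.log t :=
        Real.log_le_log (by norm_num) htm.1
      linarith
    have hLpos : (0:ℝ) < Real.log t := by linarith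
    have hkey : 50400*(1/Real.log t^9) ≤ 1260*(1/Real.log t^8) := by
      rw [mul_one_div, mul_one_div, div_le_div_iff₀ (by positivity) (by positivity)]
      nlinarith [pow_pos hLpos 8]
    linarith
  linarith [hmono.trans_eq heq]

end LiBoundAux

theorem li_upper_bound_1e18 (x : ℝ) (hx : 10 ^ 18 ≤ x) :
    (∫ t in (2:ℝ)..x, 1 / Real.log t) ≤
      x / Real.log x + x / Real.log x ^ 2 + 2 * x / Real.log x ^ 3 + 6 * x / Real.log x ^ 4
        + 24 * x / Real.log x ^ 5 + 120 * x / Real.log x ^ 6 + 720 * x / Real.log x ^ 7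
        + 6300 * x / Real.log x ^ 8 := by
  have hx' : (1000000000000000000:ℝ) ≤ x := by norm_num at hx ⊢; linarith
  have hsplit : ∫ t in (2:ℝ)..x, 1/Real.log t
      = (∫ t in (2:ℝ)..(1000000000000000000:ℝ), 1/Real.log t)
        + ∫ t in (1000000000000000000:ℝ)..x, 1/Real.log t :=
    (intervalIntegral.integral_add_adjacent_intervals
      (intIntegrable_one_div_log (by norm_num) (by norm_num))
      (intIntegrable_one_div_log (by norm_num) hx')).symm
  have h1 := head_bound
  have h2 := tail_bound hx'
  have hF : Ffun x = x / Real.log x + x / Real.log x ^ 2 + 2 * x / Real.log x ^ 3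
      + 6 * x / Real.log x ^ 4 + 24 * x / Real.log x ^ 5 + 120 * x / Real.log x ^ 6
      + 720 * x / Real.log x ^ 7 + 6300 * x / Real.log x ^ 8 := by
    unfold Ffun
    ring
  calc (∫ t in (2:ℝ)..x, 1 / Real.log t)
      = (∫ t in (2:ℝ)..(1000000000000000000:ℝ), 1/Real.log t)
        + ∫ t in (1000000000000000000:ℝ)..x, 1/Real.log t := hsplit
    _ ≤ Ffun 1000000000000000000 + (Ffun x - Ffun 1000000000000000000) := add_le_add h1 h2
    _ = Ffun x := by ring
    _ = _ := hF
end
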